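/- arXiv:2009.13489 — 4 statements merged into one kernel-verified Lean document; each statement's English description precedes it below -/
import Mathlib

section
/- Let X be a graph (1-dimensional CW complex) and p ≥ 2 an integer. Then every cellular 1-cycle α with coefficients in Z/pZ has a preimage 1-cycle α̃ with integer coefficients such that the mass of α̃ is at most p times the mass of α, where the mass of an integral chain is the sum of absolute values of its coefficients and the mass of a mod-p chain is the number of edges in its support. -/
/-! Cellular 1-chains on a graph: edges `E` with endpoint maps `s t : E → V`.
A 1-chain with coefficients in `R` is a finitely supported function `E →₀ R`;
its boundary is the induced 0-chain, and it is a cycle if the boundary vanishes. -/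

/-- The boundary of a cellular 1-chain on the graph with edge-endpoint maps `s`, `t`. -/
noncomputable def graphBoundary {V E : Type} (s t : E → V) {R : Type} [AddCommGroup R]
    (β : E →₀ R) : V →₀ R :=
  β.sum fun e r => Finsupp.single (t e) r - Finsupp.single (s e) r

/-- The mass of an integral chain: the sum of the absolute values of its coefficients. -/
def intMass {E : Type} (β : E →₀ ℤ) : ℤ := ∑ e ∈ β.support, |β e|

open Finset
open scoped Classical

section circ
variable {V E : Type} (s t : E → V)

noncomputable def uvec (v' : V) (e : E) (v : V) : ℚ :=
  (if t e = v then (1:ℚ) else 0) - (if s e = v then 1 else 0)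

lemma exists_circ (F : Finset E) (hF : F.Nonempty) (hnl : ∀ e ∈ F, s e ≠ t e)
    (hdeg : ∀ v, (∃ e ∈ F, s e = v ∨ t e = v) →
      2 ≤ (F.filter (fun e => s e = v ∨ t e = v)).card) :
    ∃ ρ : E → ℚ, (∀ e ∉ F, ρ e = 0) ∧ (∃ e ∈ F, ρ e ≠ 0) ∧
      ∀ v : V, ∑ e ∈ F, ρ e * ((if t e = v then (1:ℚ) else 0) - (if s e = v then 1 else 0)) = 0 := by
  set V' : Finset V := F.biUnion (fun e => {s e, t e}) with hV'def
  have hmem : ∀ e ∈ F, s e ∈ V' ∧ t e ∈ V' := by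
    intro e he
    constructor <;> { rw [hV'def]; rw [Finset.mem_biUnion]; exact ⟨e, he, by simp⟩ }
  have hV'ne : V'.Nonempty := by
    obtain ⟨e, he⟩ := hF
    exact ⟨s e, (hmem e he).1⟩
  -- counting: card V' ≤ card F
  have hcount : ∀ e ∈ F, (V'.filter (fun v => s e = v ∨ t e = v)) = {s e, t e} := by
    intro e he
    ext v
    simp only [Finset.mem_filter, Finset.mem_insert, Finset.mem_singleton]
    constructor
    · rintro ⟨_, h | h⟩
      · exact Or.inl h.symm
      · exact Or.inr h.symm
    · rintro (h | h)
      · exact ⟨h ▸ (hmem e he).1, Or.inl h.symm⟩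
      · exact ⟨h ▸ (hmem e he).2, Or.inr h.symm⟩
  have hsum : ∑ v ∈ V', (F.filter (fun e => s e = v ∨ t e = v)).card = 2 * F.card := by
    have : ∀ v, (F.filter (fun e => s e = v ∨ t e = v)).card
        = ∑ e ∈ F, if s e = v ∨ t e = v then 1 else 0 := by
      intro v; rw [Finset.card_filter]
    simp_rw [this]
    rw [Finset.sum_comm]
    have h2 : ∀ e ∈ F, (∑ v ∈ V', if s e = v ∨ t e = v then (1:ℕ) else 0) = 2 := by
      intro e he
      rw [← Finset.card_filter]
      rw [hcount e he]
      rw [Finset.card_insert_of_notMem (by simp [hnl e he]), Finset.card_singleton]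
    rw [Finset.sum_congr rfl h2, Finset.sum_const, smul_eq_mul, Nat.mul_comm]
  have hcard : V'.card ≤ F.card := by
    have h1 : 2 * V'.card ≤ ∑ v ∈ V', (F.filter (fun e => s e = v ∨ t e = v)).card := by
      rw [Nat.mul_comm, ← smul_eq_mul, ← Finset.sum_const]
      apply Finset.sum_le_sum
      intro v hv
      apply hdeg
      rw [hV'def, Finset.mem_biUnion] at hv
      obtain ⟨e, he, hv⟩ := hv
      simp only [Finset.mem_insert, Finset.mem_singleton] at hv
      exact ⟨e, he, by tauto⟩
    omega
  -- linear algebra: the incidence vectors of F are linearly dependent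
  let T : (↥F → ℚ) →ₗ[ℚ] (↥V' → ℚ) :=
    { toFun := fun c v => ∑ e : ↥F,
        c e * ((if t ↑e = ↑v then (1:ℚ) else 0) - (if s ↑e = ↑v then 1 else 0))
      map_add' := by
        intro a b
        funext v
        simp only [Pi.add_apply]
        rw [← Finset.sum_add_distrib]
        apply Finset.sum_congr rfl
        intro e _
        ring
      map_smul' := by
        intro m a
        funext v
        simp only [Pi.smul_apply, smul_eq_mul, RingHom.id_apply, Finset.mul_sum]
        apply Finset.sum_congr rfl
        intro e _
        ring }
  let φ : (↥V' → ℚ) →ₗ[ℚ] ℚ :=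
    { toFun := fun g => ∑ v : ↥V', g v
      map_add' := by intro a b; simp [Finset.sum_add_distrib]
      map_smul' := by intro m a; simp [Finset.mul_sum] }
  have hTker : ∀ c, T c ∈ LinearMap.ker φ := by
    intro c
    rw [LinearMap.mem_ker]
    show (∑ v : ↥V', ∑ e : ↥F, c e * ((if t ↑e = ↑v then (1:ℚ) else 0) - (if s ↑e = ↑v then 1 else 0))) = 0
    rw [Finset.sum_comm]
    apply Finset.sum_eq_zero
    intro e _
    rw [← Finset.mul_sum]
    have : ∑ v : ↥V', ((if t ↑e = ↑v then (1:ℚ) else 0) - (if s ↑e = ↑v then 1 else 0)) = 0 := by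
      rw [Finset.sum_sub_distrib]
      have hs' : (s ↑e) ∈ V' := (hmem ↑e e.2).1
      have ht' : (t ↑e) ∈ V' := (hmem ↑e e.2).2
      rw [Finset.sum_coe_sort V' (fun v => if t ↑e = v then (1:ℚ) else 0),
          Finset.sum_coe_sort V' (fun v => if s ↑e = v then (1:ℚ) else 0)]
      rw [Finset.sum_ite_eq V' (t ↑e) (fun _ => (1:ℚ)),
          Finset.sum_ite_eq V' (s ↑e) (fun _ => (1:ℚ))]
      simp [hs', ht']
    rw [this, mul_zero]
  have hφsurj : Function.Surjective φ := by
    intro q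
    obtain ⟨v0, hv0⟩ := hV'ne
    refine ⟨fun v => if v = ⟨v0, hv0⟩ then q else 0, ?_⟩
    show (∑ v : ↥V', if v = ⟨v0, hv0⟩ then q else 0) = q
    simp
  have hrank : Module.finrank ℚ (↥(LinearMap.ker φ)) = V'.card - 1 := by
    have h1 := LinearMap.finrank_range_add_finrank_ker φ
    have h2 : LinearMap.range φ = ⊤ := LinearMap.range_eq_top.mpr hφsurj
    rw [h2] at h1
    rw [finrank_top] at h1
    simp only [Module.finrank_self] at h1
    have h3 : Module.finrank ℚ (↥V' → ℚ) = V'.card := by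
      rw [Module.finrank_pi]
      exact Fintype.card_coe V'
    omega
  have hnotinj : ¬ Function.Injective (T.codRestrict (LinearMap.ker φ) hTker) := by
    intro hinj
    have := LinearMap.finrank_le_finrank_of_injective hinj
    have h4 : Module.finrank ℚ (↥F → ℚ) = F.card := by
      rw [Module.finrank_pi]
      exact Fintype.card_coe F
    rw [h4, hrank] at this
    have h5 : 1 ≤ V'.card := Finset.card_pos.mpr hV'ne
    omega
  rw [← LinearMap.ker_eq_bot] at hnotinj
  obtain ⟨c, hc_mem, hc_ne⟩ := Submodule.exists_mem_ne_zero_of_ne_bot hnotinj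
  have hTc : T c = 0 := by
    have := LinearMap.mem_ker.mp hc_mem
    have h := congrArg Subtype.val this
    exact h
  obtain ⟨ebar, hebar⟩ := Function.ne_iff.mp hc_ne
  set ρ : E → ℚ := fun e => if h : e ∈ F then c ⟨e, h⟩ else 0 with hρdef
  have hρ : ∀ (e) (he : e ∈ F), ρ e = c ⟨e, he⟩ := fun e he => dif_pos he
  have hρ0 : ∀ e ∉ F, ρ e = 0 := fun e he => dif_neg he
  refine ⟨ρ, hρ0, ⟨↑ebar, ebar.2, ?_⟩, ?_⟩
  · rw [hρ ↑ebar ebar.2]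
    simpa using hebar
  · intro v
    by_cases hv : v ∈ V'
    · have h0 := congrFun hTc ⟨v, hv⟩
      simp only [Pi.zero_apply] at h0
      have h1 : (T c) ⟨v, hv⟩ = ∑ e : ↥F, c e * ((if t ↑e = v then (1:ℚ) else 0) - (if s ↑e = v then 1 else 0)) := rfl
      rw [h1] at h0
      have h3 : ∑ e : ↥F, ρ ↑e * ((if t ↑e = v then (1:ℚ) else 0) - (if s ↑e = v then 1 else 0)) = 0 := by
        refine Eq.trans ?_ h0
        refine Finset.sum_congr rfl fun e _ => ?_
        rw [hρ ↑e e.2]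
      exact (Finset.sum_coe_sort F (fun e => ρ e * ((if t e = v then (1:ℚ) else 0) - (if s e = v then 1 else 0)))).symm.trans h3
    · apply Finset.sum_eq_zero
      intro e he
      have h1 : t e ≠ v := fun h => hv (h ▸ (hmem e he).2)
      have h2 : s e ≠ v := fun h => hv (h ▸ (hmem e he).1)
      simp [h1, h2]

noncomputable def bdv (S : Finset E) (x : E → ℚ) (v : V) : ℚ :=
  ∑ e ∈ S, x e * ((if t e = v then (1:ℚ) else 0) - (if s e = v then 1 else 0))

lemma bdv_add_smul (S : Finset E) (x ρ : E → ℚ) (c : ℚ) (v : V) :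
    bdv s t S (fun e => x e + c * ρ e) v = bdv s t S x v + c * bdv s t S ρ v := by
  simp only [bdv, Finset.mul_sum, ← Finset.sum_add_distrib]
  apply Finset.sum_congr rfl
  intro e _
  ring

lemma roundLemma (S : Finset E) :
    ∀ (n : ℕ) (x : E → ℚ),
      (S.filter (fun e => x e ≠ 0 ∧ x e ≠ 1)).card ≤ n →
      (∀ e, 0 ≤ x e) → (∀ e, x e ≤ 1) →
      (∀ v, ∃ k : ℤ, bdv s t S x v = (k : ℚ)) →
      ∃ y : E → ℚ, (∀ e, y e = 0 ∨ y e = 1) ∧ (∀ e, x e = 0 → y e = 0) ∧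
        (∀ v, bdv s t S y v = bdv s t S x v) := by
  intro n
  induction n with
  | zero =>
    intro x hcard h0 h1 _
    have hF : S.filter (fun e => x e ≠ 0 ∧ x e ≠ 1) = ∅ := by
      rw [← Finset.card_eq_zero]; omega
    refine ⟨fun e => if e ∈ S then x e else 0, ?_, ?_, ?_⟩
    · intro e
      by_cases he : e ∈ S
      · simp only [if_pos he]
        have : e ∉ S.filter (fun e => x e ≠ 0 ∧ x e ≠ 1) := by rw [hF]; simp
        rw [Finset.mem_filter] at this
        push_neg at this
        by_cases h : x e = 0
        · exact Or.inl h
        · exact Or.inr (this he h)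
      · simp [he]
    · intro e hxe
      by_cases he : e ∈ S <;> simp [he, hxe]
    · intro v
      apply Finset.sum_congr rfl
      intro e he
      simp only [if_pos he]
  | succ n ih =>
    intro x hcard h0 h1 hint
    set F := S.filter (fun e => x e ≠ 0 ∧ x e ≠ 1) with hFdef
    by_cases hFe : F = ∅
    · -- no fractional edges at all
      refine ⟨fun e => if e ∈ S then x e else 0, ?_, ?_, ?_⟩
      · intro e
        by_cases he : e ∈ S
        · simp only [if_pos he]
          have : e ∉ F := by rw [hFe]; simp
          rw [hFdef, Finset.mem_filter] at this
          push_neg at this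
          by_cases h : x e = 0
          · exact Or.inl h
          · exact Or.inr (this he h)
        · simp [he]
      · intro e hxe
        by_cases he : e ∈ S <;> simp [he, hxe]
      · intro v
        apply Finset.sum_congr rfl
        intro e he
        simp only [if_pos he]
    · have hFne : F.Nonempty := Finset.nonempty_of_ne_empty hFe
      have hFS : F ⊆ S := Finset.filter_subset _ _
      have hfrac : ∀ e ∈ F, 0 < x e ∧ x e < 1 := by
        intro e he
        rw [hFdef, Finset.mem_filter] at he
        exact ⟨lt_of_le_of_ne (h0 e) (Ne.symm he.2.1), lt_of_le_of_ne (h1 e) he.2.2⟩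
      by_cases hloop : ∃ e₀ ∈ F, s e₀ = t e₀
      · -- kill a loop edge
        obtain ⟨e₀, he₀F, he₀⟩ := hloop
        set x' := Function.update x e₀ 0 with hx'def
        have hx'ne : ∀ e, e ≠ e₀ → x' e = x e := fun e he => Function.update_of_ne he _ _
        have hx'e₀ : x' e₀ = 0 := Function.update_self _ _ _
        have hbd' : ∀ v, bdv s t S x' v = bdv s t S x v := by
          intro v
          apply Finset.sum_congr rfl
          intro e _
          by_cases he : e = e₀
          · subst he
            rw [he₀]
            simp
          · rw [hx'ne e he]
        have hcard' : (S.filter (fun e => x' e ≠ 0 ∧ x' e ≠ 1)).card ≤ n := by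
          have hsub : S.filter (fun e => x' e ≠ 0 ∧ x' e ≠ 1) ⊆ F.erase e₀ := by
            intro e he
            rw [Finset.mem_filter] at he
            have hne : e ≠ e₀ := by
              intro h; subst h
              rw [hx'e₀] at he
              exact he.2.1 rfl
            rw [Finset.mem_erase]
            refine ⟨hne, ?_⟩
            rw [hFdef, Finset.mem_filter]
            rw [hx'ne e hne] at he
            exact ⟨he.1, he.2⟩
          have h5 := Finset.card_le_card hsub
          have h6 : (F.erase e₀).card = F.card - 1 := Finset.card_erase_of_mem he₀F
          have h7 : 1 ≤ F.card := Finset.card_pos.mpr hFne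
          omega
        obtain ⟨y, hy01, hy0, hybd⟩ := ih x' hcard'
          (fun e => by
            by_cases he : e = e₀
            · subst he; rw [hx'e₀]
            · rw [hx'ne e he]; exact h0 e)
          (fun e => by
            by_cases he : e = e₀
            · subst he; rw [hx'e₀]; norm_num
            · rw [hx'ne e he]; exact h1 e)
          (fun v => by rw [hbd' v]; exact hint v)
        refine ⟨y, hy01, ?_, fun v => (hybd v).trans (hbd' v)⟩
        intro e hxe
        apply hy0
        by_cases he : e = e₀
        · subst he; exact hx'e₀
        · rw [hx'ne e he]; exact hxe
      · -- no loops among fractional edges: find a circulation and push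
        push_neg at hloop
        have hdeg : ∀ v, (∃ e ∈ F, s e = v ∨ t e = v) →
            2 ≤ (F.filter (fun e => s e = v ∨ t e = v)).card := by
          intro v ⟨e₀, he₀F, he₀v⟩
          by_contra hlt
          push_neg at hlt
          have hmemD : e₀ ∈ F.filter (fun e => s e = v ∨ t e = v) :=
            Finset.mem_filter.mpr ⟨he₀F, he₀v⟩
          have hcard1 : (F.filter (fun e => s e = v ∨ t e = v)).card = 1 := by
            have := Finset.card_pos.mpr ⟨e₀, hmemD⟩
            omega
          obtain ⟨a, ha⟩ := Finset.card_eq_one.mp hcard1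
          have hae₀ : a = e₀ := by
            have := hmemD
            rw [ha, Finset.mem_singleton] at this
            exact this.symm
          rw [hae₀] at ha
          -- each vertex's boundary value: integral part plus ± x e₀
          set R0 := (Int.castRingHom ℚ).range with hR0def
          have hR0mem : ∀ q : ℚ, (∃ k : ℤ, q = (k:ℚ)) → q ∈ R0 := by
            rintro q ⟨k, hk⟩; exact ⟨k, hk.symm⟩
          have hsplit : ∑ e ∈ S \ F, x e * ((if t e = v then (1:ℚ) else 0) - (if s e = v then 1 else 0))
              + ∑ e ∈ F, x e * ((if t e = v then (1:ℚ) else 0) - (if s e = v then 1 else 0))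
              = bdv s t S x v := Finset.sum_sdiff hFS
          have hSdF : ∑ e ∈ S \ F, x e * ((if t e = v then (1:ℚ) else 0) - (if s e = v then 1 else 0)) ∈ R0 := by
            apply Subring.sum_mem
            intro e he
            rw [Finset.mem_sdiff] at he
            have hx01 : x e = 0 ∨ x e = 1 := by
              by_contra hcon
              push_neg at hcon
              exact he.2 (Finset.mem_filter.mpr ⟨he.1, hcon⟩)
            rcases hx01 with h | h <;> rw [h]
            · rw [zero_mul]; exact Subring.zero_mem R0
            · rw [one_mul]
              apply Subring.sub_mem <;> split_ifs <;>
                first | exact Subring.one_mem R0 | exact Subring.zero_mem R0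
          have hFsum : ∑ e ∈ F, x e * ((if t e = v then (1:ℚ) else 0) - (if s e = v then 1 else 0))
              = x e₀ * ((if t e₀ = v then (1:ℚ) else 0) - (if s e₀ = v then 1 else 0)) := by
            apply Finset.sum_eq_single_of_mem e₀ he₀F
            intro e heF hne
            have : e ∉ F.filter (fun e => s e = v ∨ t e = v) := by
              rw [ha, Finset.mem_singleton]; exact hne
            rw [Finset.mem_filter] at this
            push_neg at this
            have hni := this heF
            rw [if_neg (by tauto), if_neg (by tauto)]
            ring
          have hxe₀R0 : x e₀ ∈ R0 := by
            have hbdR0 : bdv s t S x v ∈ R0 := hR0mem _ (hint v)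
            have hFR0 : x e₀ * ((if t e₀ = v then (1:ℚ) else 0) - (if s e₀ = v then 1 else 0)) ∈ R0 := by
              rw [← hFsum]
              have := Subring.sub_mem R0 hbdR0 hSdF
              rw [← hsplit] at this
              simpa using this
            rcases he₀v with h | h
            · have hnt : t e₀ ≠ v := fun hh => hloop e₀ he₀F (h.trans hh.symm)
              rw [if_neg hnt, if_pos h] at hFR0
              have : -(x e₀) ∈ R0 := by simpa using hFR0
              simpa using Subring.neg_mem R0 this
            · have hns : s e₀ ≠ v := fun hh => hloop e₀ he₀F (hh.trans h.symm)
              rw [if_pos h, if_neg hns] at hFR0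
              simpa using hFR0
          obtain ⟨k, hk⟩ := hxe₀R0
          have hf := hfrac e₀ he₀F
          rw [← hk] at hf
          have h01 : (0:ℚ) < (k:ℚ) ∧ (k:ℚ) < 1 := hf
          have : (0:ℤ) < k ∧ k < 1 := by exact_mod_cast h01
          omega
        obtain ⟨ρ, hρ0, ⟨e₁, he₁F, hρe₁⟩, hρbd⟩ := exists_circ s t F hFne hloop hdeg
        have hρbdS : ∀ v, bdv s t S ρ v = 0 := by
          intro v
          rw [bdv, ← Finset.sum_subset hFS (fun e _ he => by rw [hρ0 e he, zero_mul])]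
          exact hρbd v
        set A := F.filter (fun e => ρ e ≠ 0) with hAdef
        have hAne : A.Nonempty := ⟨e₁, Finset.mem_filter.mpr ⟨he₁F, hρe₁⟩⟩
        set room : E → ℚ := fun e => if 0 < ρ e then (1 - x e) / ρ e else x e / (-ρ e) with hroomdef
        obtain ⟨estar, hestarA, hestarmin⟩ := Finset.exists_min_image A room hAne
        set c := room estar with hcdef
        have hAfrac : ∀ e ∈ A, 0 < x e ∧ x e < 1 := by
          intro e he; exact hfrac e (Finset.mem_filter.mp he).1
        have hroompos : ∀ e ∈ A, 0 < room e := by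
          intro e he
          have hρne : ρ e ≠ 0 := (Finset.mem_filter.mp he).2
          have hxe := hAfrac e he
          simp only [hroomdef]
          by_cases hρpos : 0 < ρ e
          · rw [if_pos hρpos]; exact div_pos (by linarith) hρpos
          · rw [if_neg hρpos]
            have hρneg : ρ e < 0 := lt_of_le_of_ne (not_lt.mp hρpos) hρne
            exact div_pos hxe.1 (by linarith)
        have hcpos : 0 < c := hroompos estar hestarA
        set x' : E → ℚ := fun e => x e + c * ρ e with hx'def
        have hx'eq : ∀ e ∉ A, x' e = x e := by
          intro e he
          have : ρ e = 0 := by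
            by_cases heF : e ∈ F
            · by_contra hne
              exact he (Finset.mem_filter.mpr ⟨heF, hne⟩)
            · exact hρ0 e heF
          rw [hx'def]; simp [this]
        have hkey : ∀ e ∈ A, 0 ≤ x' e ∧ x' e ≤ 1 := by
          intro e he
          have hρne : ρ e ≠ 0 := (Finset.mem_filter.mp he).2
          have hxe := hAfrac e he
          have hcmin : c ≤ room e := hestarmin e he
          by_cases hρpos : 0 < ρ e
          · have hcr : c * ρ e ≤ 1 - x e := by
              have : room e = (1 - x e) / ρ e := by simp only [hroomdef]; exact if_pos hρpos
              rw [this] at hcmin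
              exact (le_div_iff₀ hρpos).mp hcmin
            constructor
            · have : 0 ≤ c * ρ e := le_of_lt (mul_pos hcpos hρpos)
              simp only [hx'def]; linarith
            · simp only [hx'def]; linarith
          · have hρneg : ρ e < 0 := lt_of_le_of_ne (not_lt.mp hρpos) hρne
            have hcr : c * (-ρ e) ≤ x e := by
              have : room e = x e / (-ρ e) := by simp only [hroomdef]; exact if_neg hρpos
              rw [this] at hcmin
              exact (le_div_iff₀ (by linarith)).mp hcmin
            constructor
            · simp only [hx'def]; nlinarith
            · have : c * ρ e < 0 := mul_neg_of_pos_of_neg hcpos hρneg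
              simp only [hx'def]; linarith
        have h0' : ∀ e, 0 ≤ x' e := by
          intro e
          by_cases he : e ∈ A
          · exact (hkey e he).1
          · rw [hx'eq e he]; exact h0 e
        have h1' : ∀ e, x' e ≤ 1 := by
          intro e
          by_cases he : e ∈ A
          · exact (hkey e he).2
          · rw [hx'eq e he]; exact h1 e
        have hbd' : ∀ v, bdv s t S x' v = bdv s t S x v := by
          intro v
          have := bdv_add_smul s t S x ρ c v
          rw [hx'def]
          rw [this, hρbdS v, mul_zero, add_zero]
        -- estar becomes integral
        have hestar01 : x' estar = 0 ∨ x' estar = 1 := by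
          have hρne : ρ estar ≠ 0 := (Finset.mem_filter.mp hestarA).2
          by_cases hρpos : 0 < ρ estar
          · right
            have : c = (1 - x estar) / ρ estar := by simp only [hcdef, hroomdef]; exact if_pos hρpos
            simp only [hx'def]
            rw [this, div_mul_cancel₀ _ hρne]
            ring
          · left
            have hρneg : ρ estar < 0 := lt_of_le_of_ne (not_lt.mp hρpos) hρne
            have : c = x estar / (-ρ estar) := by simp only [hcdef, hroomdef]; exact if_neg hρpos
            simp only [hx'def]
            rw [this]
            field_simp
            ring
        have hcard' : (S.filter (fun e => x' e ≠ 0 ∧ x' e ≠ 1)).card ≤ n := by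
          have hsub : S.filter (fun e => x' e ≠ 0 ∧ x' e ≠ 1) ⊆ F.erase estar := by
            intro e he
            rw [Finset.mem_filter] at he
            have heF : e ∈ F := by
              by_contra heF
              have heA : e ∉ A := fun h => heF (Finset.mem_filter.mp h).1
              rw [hx'eq e heA] at he
              exact heF (Finset.mem_filter.mpr ⟨he.1, he.2⟩)
            rw [Finset.mem_erase]
            refine ⟨?_, heF⟩
            intro h; subst h
            rcases hestar01 with h | h
            · exact he.2.1 h
            · exact he.2.2 h
          have h5 := Finset.card_le_card hsub
          have h6 : (F.erase estar).card = F.card - 1 :=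
            Finset.card_erase_of_mem (Finset.mem_filter.mp hestarA).1
          have h7 : 1 ≤ F.card := Finset.card_pos.mpr hFne
          omega
        obtain ⟨y, hy01, hy0, hybd⟩ := ih x' hcard' h0' h1'
          (fun v => by rw [hbd' v]; exact hint v)
        refine ⟨y, hy01, ?_, fun v => (hybd v).trans (hbd' v)⟩
        intro e hxe
        apply hy0
        have heA : e ∉ A := by
          intro h
          exact absurd hxe (ne_of_gt (hAfrac e h).1)
        rw [hx'eq e heA]
        exact hxe


lemma gb_apply {R : Type} [AddCommGroup R] (β : E →₀ R) (S : Finset E)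
    (hS : β.support ⊆ S) (v : V) :
    graphBoundary s t β v =
      ∑ e ∈ S, ((if t e = v then β e else 0) - (if s e = v then β e else 0)) := by
  have h1 : graphBoundary s t β v
      = ∑ e ∈ β.support, ((if t e = v then β e else 0) - (if s e = v then β e else 0)) := by
    rw [graphBoundary, Finsupp.sum_apply, Finsupp.sum]
    apply Finset.sum_congr rfl
    intro e _
    simp [Finsupp.single_apply]
  rw [h1]
  exact Finset.sum_subset hS (fun e _ hne => by
    simp [Finsupp.notMem_support_iff.mp hne])

end circ

/-- If `X` is a graph and `p ≥ 2`, then every cellular 1-cycle `α` with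
coefficients in `ℤ/pℤ` has a preimage integral 1-cycle `α̃` with
`Mass(α̃) ≤ p · Mass(α)`, where the mass of a mod-`p` chain is the size of its support. -/
theorem mod_p_cycle_has_small_integral_lift
    (V E : Type) (s t : E → V) (p : ℕ) (hp : 2 ≤ p)
    (α : E →₀ ZMod p) (hα : graphBoundary s t α = 0) :
    ∃ αlift : E →₀ ℤ,
      Finsupp.mapRange (Int.cast : ℤ → ZMod p) (by simp) αlift = α ∧
      graphBoundary s t αlift = 0 ∧
      intMass αlift ≤ (p : ℤ) * α.support.card := by
  classical
  haveI : NeZero p := ⟨by omega⟩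
  set S := α.support with hSdef
  set β : E →₀ ℤ := Finsupp.mapRange (fun z : ZMod p => (z.val : ℤ)) (by simp) α with hβdef
  have hβapp : ∀ e, β e = ((α e).val : ℤ) := fun e => by rw [hβdef, Finsupp.mapRange_apply]
  have hβsupp : β.support ⊆ S := Finsupp.support_mapRange
  have hβcast : ∀ e, ((β e : ℤ) : ZMod p) = α e := by
    intro e
    rw [hβapp e]
    push_cast
    exact ZMod.natCast_rightInverse (α e)
  have hβ0 : ∀ e, 0 ≤ β e := fun e => by rw [hβapp e]; positivity
  have hβlt : ∀ e, β e < (p : ℤ) := fun e => by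
    rw [hβapp e]; exact_mod_cast ZMod.val_lt (α e)
  have hdvd : ∀ v, (p : ℤ) ∣ graphBoundary s t β v := by
    intro v
    have h1 : ((graphBoundary s t β v : ℤ) : ZMod p) = 0 := by
      rw [gb_apply s t β S hβsupp v]
      have h2 : graphBoundary s t α v = 0 := by rw [hα]; rfl
      rw [gb_apply s t α S subset_rfl v] at h2
      rw [← h2]
      push_cast
      apply Finset.sum_congr rfl
      intro e _
      split_ifs <;> simp [hβcast e]
    exact (ZMod.intCast_zmod_eq_zero_iff_dvd _ p).mp h1
  set γ : V →₀ ℤ := (graphBoundary s t β).mapRange (fun z => z / p) (by simp) with hγdef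
  have hγ : ∀ v, (p : ℤ) * γ v = graphBoundary s t β v := by
    intro v
    rw [hγdef, Finsupp.mapRange_apply]
    exact Int.mul_ediv_cancel' (hdvd v)
  set x : E → ℚ := fun e => (β e : ℚ) / p with hxdef
  have hppos : (0:ℚ) < p := by positivity
  have hx0 : ∀ e, 0 ≤ x e := by
    intro e
    apply div_nonneg _ (le_of_lt hppos)
    exact_mod_cast hβ0 e
  have hx1 : ∀ e, x e ≤ 1 := by
    intro e
    rw [hxdef, div_le_one hppos]
    exact_mod_cast le_of_lt (hβlt e)
  have key : ∀ v, bdv s t S x v = ((γ v : ℤ) : ℚ) := by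
    intro v
    have h4 : bdv s t S x v
        = (∑ e ∈ S, (β e : ℚ) * ((if t e = v then (1:ℚ) else 0) - (if s e = v then 1 else 0))) / p := by
      rw [bdv, Finset.sum_div]
      apply Finset.sum_congr rfl
      intro e _
      rw [hxdef]
      ring
    have h5 : ∑ e ∈ S, (β e : ℚ) * ((if t e = v then (1:ℚ) else 0) - (if s e = v then 1 else 0))
        = ((graphBoundary s t β v : ℤ) : ℚ) := by
      rw [gb_apply s t β S hβsupp v]
      push_cast
      apply Finset.sum_congr rfl
      intro e _
      split_ifs <;> ring
    rw [h4, h5, ← hγ v]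
    push_cast
    rw [mul_comm, mul_div_assoc, div_self (ne_of_gt hppos), mul_one]
  obtain ⟨y, hy01, hy0, hybd⟩ := roundLemma s t S S.card x
    (Finset.card_le_card (Finset.filter_subset _ _)) hx0 hx1
    (fun v => ⟨γ v, key v⟩)
  have hyoff : ∀ e ∉ S, y e = 0 := by
    intro e he
    apply hy0
    have hβe : β e = 0 := Finsupp.notMem_support_iff.mp (fun h => he (hβsupp h))
    rw [hxdef]
    simp [hβe]
  set δ : E →₀ ℤ := Finsupp.onFinset S (fun e => if y e = 1 then 1 else 0)
    (by
      intro e he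
      by_contra hS
      simp only [hyoff e hS] at he
      simp at he) with hδdef
  have hδapp : ∀ e, δ e = if y e = 1 then 1 else 0 := fun e => rfl
  have hδ01 : ∀ e, δ e = 0 ∨ δ e = 1 := by
    intro e
    rw [hδapp e]
    split_ifs <;> simp
  have hδcast : ∀ e, ((δ e : ℤ) : ℚ) = y e := by
    intro e
    rcases hy01 e with h | h <;> rw [hδapp e] <;> simp [h]
  have hδsupp : δ.support ⊆ S := Finsupp.support_onFinset_subset
  have hδbd : ∀ v, graphBoundary s t δ v = γ v := by
    intro v
    have hterm : ∀ e ∈ S,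
        (((if t e = v then δ e else 0) - (if s e = v then δ e else 0) : ℤ) : ℚ)
        = y e * ((if t e = v then (1:ℚ) else 0) - (if s e = v then 1 else 0)) := by
      intro e _
      split_ifs <;> push_cast <;> rw [← hδcast e] <;> ring
    have h6 : ((graphBoundary s t δ v : ℤ) : ℚ) = bdv s t S y v := by
      rw [gb_apply s t δ S hδsupp v]
      rw [Int.cast_sum]
      rw [bdv]
      exact Finset.sum_congr rfl hterm
    have h7 : bdv s t S y v = ((γ v : ℤ) : ℚ) := (hybd v).trans (key v)
    have h8 := h6.trans h7
    exact_mod_cast h8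
  set αlift : E →₀ ℤ := β - (p : ℤ) • δ with hliftdef
  have hliftapp : ∀ e, αlift e = β e - (p : ℤ) * δ e := by
    intro e
    rw [hliftdef, Finsupp.sub_apply, Finsupp.smul_apply, smul_eq_mul]
  have hliftsupp : αlift.support ⊆ S := by
    intro e he
    rw [Finsupp.mem_support_iff] at he
    by_contra hS
    have hβe : β e = 0 := Finsupp.notMem_support_iff.mp (fun h => hS (hβsupp h))
    have hδe : δ e = 0 := Finsupp.notMem_support_iff.mp (fun h => hS (hδsupp h))
    rw [hliftapp e, hβe, hδe] at he
    simp at he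
  refine ⟨αlift, ?_, ?_, ?_⟩
  · ext e
    rw [Finsupp.mapRange_apply, hliftapp e]
    push_cast
    rw [ZMod.natCast_self, zero_mul, sub_zero]
    exact hβcast e
  · ext v
    have h9 : graphBoundary s t αlift v
        = graphBoundary s t β v - (p : ℤ) * graphBoundary s t δ v := by
      rw [gb_apply s t αlift S hliftsupp v, gb_apply s t β S hβsupp v,
        gb_apply s t δ S hδsupp v, Finset.mul_sum, ← Finset.sum_sub_distrib]
      apply Finset.sum_congr rfl
      intro e _
      rw [hliftapp e]
      split_ifs <;> ring
    rw [h9, hδbd v, hγ v, sub_self]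
    rfl
  · have h10 : intMass αlift ≤ ∑ e ∈ S, |αlift e| := by
      rw [intMass]
      exact Finset.sum_le_sum_of_subset_of_nonneg hliftsupp
        (fun e _ _ => abs_nonneg _)
    have h11 : ∀ e ∈ S, |αlift e| ≤ (p : ℤ) := by
      intro e _
      rw [hliftapp e]
      rcases hδ01 e with h | h <;> rw [h]
      · rw [mul_zero, sub_zero, abs_of_nonneg (hβ0 e)]
        exact le_of_lt (hβlt e)
      · rw [mul_one, abs_of_nonpos (by linarith [hβlt e])]
        have := hβ0 e
        linarith
    calc intMass αlift ≤ ∑ e ∈ S, |αlift e| := h10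
      _ ≤ ∑ _e ∈ S, (p : ℤ) := Finset.sum_le_sum h11
      _ = (p : ℤ) * S.card := by rw [Finset.sum_const, nsmul_eq_mul, mul_comm]
      _ = (p : ℤ) * α.support.card := by rw [hSdef]
end

section
/- In a connected graph X, any minimal-mass real 1-chain filling a 0-cycle with integer coefficients can be chosen with integer coefficients; more precisely, the infimum of the ℓ¹-norm over real 1-chains β with ∂β = c, where c is an integral 0-cycle (a finitely supported function on vertices with total sum zero), is attained by an integral 1-chain. -/
/-- Two vertices are connected by an edge (in either orientation). -/
def graphAdj {V E : Type} (s t : E → V) (a b : V) : Prop :=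
  ∃ e, (s e = a ∧ t e = b) ∨ (s e = b ∧ t e = a)

namespace IntegralFilling

variable {V E : Type} (s t : E → V)

section R
variable {R : Type} [AddCommGroup R]

theorem gB_single (e : E) (r : R) :
    graphBoundary s t (Finsupp.single e r)
      = Finsupp.single (t e) r - Finsupp.single (s e) r := by
  unfold graphBoundary
  rw [Finsupp.sum_single_index]
  simp

theorem gB_zero : graphBoundary s t (0 : E →₀ R) = 0 := Finsupp.sum_zero_index

theorem gB_add (β₁ β₂ : E →₀ R) :
    graphBoundary s t (β₁ + β₂) = graphBoundary s t β₁ + graphBoundary s t β₂ :=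
  Finsupp.sum_add_index' (by simp)
    (by intro e r₁ r₂; rw [Finsupp.single_add, Finsupp.single_add]; abel)

/-- `graphBoundary` as an `AddMonoidHom`. -/
noncomputable def gBhom : (E →₀ R) →+ (V →₀ R) :=
  { toFun := graphBoundary s t, map_zero' := gB_zero s t, map_add' := gB_add s t }

lemma gBhom_apply (β : E →₀ R) : gBhom s t β = graphBoundary s t β := rfl

end R

theorem gB_smul (a : ℝ) (β : E →₀ ℝ) :
    graphBoundary s t (a • β) = a • graphBoundary s t β := by
  unfold graphBoundary
  rw [Finsupp.sum_smul_index' (fun e => by simp), Finsupp.smul_sum]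
  apply Finsupp.sum_congr
  intro e _
  simp [smul_sub, Finsupp.smul_single]

theorem gB_mapRange (γ : E →₀ ℤ) :
    graphBoundary s t (Finsupp.mapRange (Int.cast : ℤ → ℝ) Int.cast_zero γ) =
      Finsupp.mapRange (Int.cast : ℤ → ℝ) Int.cast_zero (graphBoundary s t γ) := by
  induction γ using Finsupp.induction with
  | zero => simp [gB_zero]
  | single_add e n γ hne hn ih =>
      rw [Finsupp.mapRange_add Int.cast_add, gB_add, gB_add, Finsupp.mapRange_add Int.cast_add,
        ih, Finsupp.mapRange_single, gB_single, gB_single,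
        Finsupp.mapRange_sub Int.cast_sub, Finsupp.mapRange_single, Finsupp.mapRange_single]

noncomputable def K : Subring ℝ := (Int.castRingHom ℝ).range

lemma mem_K_iff {x : ℝ} : x ∈ K ↔ ∃ n : ℤ, (n : ℝ) = x := by
  simp [K, RingHom.mem_range]

open Classical in
noncomputable def frac (β : E →₀ ℝ) : Finset E := β.support.filter fun e => β e ∉ K

lemma mem_frac {β : E →₀ ℝ} {e : E} : e ∈ frac β ↔ β e ∉ K := by
  classical
  simp only [frac, Finset.mem_filter, Finsupp.mem_support_iff]
  exact ⟨fun h => h.2, fun h => ⟨fun h0 => h (h0 ▸ K.zero_mem), h⟩⟩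

open Classical in
lemma gB_apply (β : E →₀ ℝ) (v : V) :
    graphBoundary s t β v =
      ∑ e ∈ β.support, ((if t e = v then β e else 0) - (if s e = v then β e else 0)) := by
  unfold graphBoundary
  rw [Finsupp.sum_apply, Finsupp.sum]
  apply Finset.sum_congr rfl
  intro e _
  simp [Finsupp.single_apply]


lemma telescope {M : Type} [AddCommGroup M] (g : ℕ → M) (i j : ℕ) (h : i ≤ j) :
    ∑ k ∈ Finset.Ico i j, (g (k + 1) - g k) = g j - g i := by
  induction j, h using Nat.le_induction with
  | base => simp
  | succ j hij ih => rw [Finset.sum_Ico_succ_top (by omega), ih]; abel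

lemma degree_two {β : E →₀ ℝ} (hβ : ∀ v, graphBoundary s t β v ∈ K)
    {e : E} (he : e ∈ frac β) {v : V} (hv : s e = v ∨ t e = v) (hst : s e ≠ t e) :
    ∃ e', e' ∈ frac β ∧ e' ≠ e ∧ (s e' = v ∨ t e' = v) := by
  classical
  by_contra hcon
  push_neg at hcon
  have he_supp : e ∈ β.support := by
    rw [Finsupp.mem_support_iff]
    exact fun h0 => (mem_frac.1 he) (h0 ▸ K.zero_mem)
  have hsum := hβ v
  rw [gB_apply, ← Finset.sum_erase_add _ _ he_supp] at hsum
  have h1 : ∑ e' ∈ β.support.erase e,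
      ((if t e' = v then β e' else 0) - (if s e' = v then β e' else 0)) ∈ K := by
    apply Subring.sum_mem
    intro e' he'
    rcases Finset.mem_erase.1 he' with ⟨hne, hmem⟩
    by_cases hf : e' ∈ frac β
    · rcases hcon e' hf hne with ⟨h1, h2⟩
      simp [h1, h2, K.zero_mem]
    · have : β e' ∈ K := by
        by_contra h; exact hf (mem_frac.2 h)
      split_ifs <;> simp [this, K.zero_mem, K.sub_mem, K.neg_mem]
  have h2 : ((if t e = v then β e else 0) - (if s e = v then β e else 0)) ∈ K := by
    have := K.sub_mem hsum h1
    simpa using this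
  rcases hv with hv | hv
  · have htv : t e ≠ v := fun h => hst (hv.trans h.symm)
    rw [if_pos hv, if_neg htv] at h2
    exact (mem_frac.1 he) (by simpa using K.neg_mem h2)
  · have hsv : s e ≠ v := fun h => hst (h.trans hv.symm)
    rw [if_pos hv, if_neg hsv] at h2
    exact (mem_frac.1 he) (by simpa using h2)


lemma exists_cycle {β : E →₀ ℝ} (hβ : ∀ v, graphBoundary s t β v ∈ K)
    (hne : (frac β).Nonempty) :
    ∃ σ : E →₀ ℝ, σ ≠ 0 ∧ σ.support ⊆ frac β ∧ graphBoundary s t σ = 0 := by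
  classical
  by_cases hloop : ∃ e ∈ frac β, s e = t e
  · obtain ⟨e, he, hst⟩ := hloop
    refine ⟨Finsupp.single e 1, ?_, ?_, ?_⟩
    · simpa using Finsupp.single_ne_zero.2 (one_ne_zero)
    · refine (Finsupp.support_single_subset).trans ?_
      simpa using he
    · rw [gB_single, hst, sub_self]
  · push_neg at hloop
    -- step function
    have step : ∀ d : E × Bool, d.1 ∈ frac β →
        ∃ d' : E × Bool, d'.1 ∈ frac β ∧ d'.1 ≠ d.1 ∧
          (if d'.2 then s d'.1 else t d'.1) = (if d.2 then t d.1 else s d.1) := by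
      intro d hd
      set v := (if d.2 then t d.1 else s d.1) with hv
      have hv' : s d.1 = v ∨ t d.1 = v := by
        cases hb : d.2 <;> simp [hv, hb]
      obtain ⟨e', he', hne', hinc⟩ := degree_two s t hβ hd hv' (hloop d.1 hd)
      rcases hinc with h | h
      · exact ⟨(e', true), he', hne', by simpa using h⟩
      · exact ⟨(e', false), he', hne', by simpa using h⟩
    choose f hf1 hf2 hf3 using step
    obtain ⟨e₀, he₀⟩ := hne
    let g : ℕ → {d : E × Bool // d.1 ∈ frac β} := fun n =>
      Nat.rec ⟨(e₀, true), he₀⟩ (fun _ p => ⟨f p.1 p.2, hf1 p.1 p.2⟩) n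
    have hgsucc : ∀ n, (g (n + 1)).1 = f (g n).1 (g n).2 := fun n => rfl
    set vv : ℕ → V := fun n => (if (g n).1.2 then s (g n).1.1 else t (g n).1.1) with hvv
    have hE : ∀ n, (g n).1.1 ∈ frac β := fun n => (g n).2
    have hNB : ∀ n, (g (n + 1)).1.1 ≠ (g n).1.1 := by
      intro n
      rw [hgsucc]
      exact fun h => (hf2 (g n).1 (g n).2) h
    have hT : ∀ n, vv (n + 1) = (if (g n).1.2 then t (g n).1.1 else s (g n).1.1) := by
      intro n
      have := hf3 (g n).1 (g n).2
      simpa [hvv, hgsucc n] using this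
    -- pigeonhole
    set W : Finset V := (frac β).image s ∪ (frac β).image t with hW
    have hmaps : ∀ n, vv n ∈ W := by
      intro n
      rcases hb : (g n).1.2 with _ | _ <;> simp only [hvv, hb, if_true, if_false]
      · exact Finset.mem_union_right _ (Finset.mem_image_of_mem t (hE n))
      · exact Finset.mem_union_left _ (Finset.mem_image_of_mem s (hE n))
    obtain ⟨a, _, b, _, hab, hvab⟩ :=
      Finset.exists_ne_map_eq_of_card_lt_of_maps_to
        (s := Finset.range (W.card + 1)) (by simp) (fun n _ => hmaps n)
    have hPex : ∃ n, ∃ m, m < n ∧ vv m = vv n := by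
      rcases hab.lt_or_gt with h | h
      · exact ⟨b, a, h, hvab⟩
      · exact ⟨a, b, h, hvab.symm⟩
    set j := Nat.find hPex with hj
    obtain ⟨i, hij, hvij⟩ := Nat.find_spec hPex
    have hinj : ∀ a b, a < b → b < j → vv a ≠ vv b := by
      intro a b h1 h2 h3
      exact Nat.find_min hPex h2 ⟨a, h1, h3⟩
    -- endpoints description
    have hends : ∀ n, (vv n = s (g n).1.1 ∧ vv (n+1) = t (g n).1.1) ∨
        (vv n = t (g n).1.1 ∧ vv (n+1) = s (g n).1.1) := by
      intro n
      rcases hb : (g n).1.2 with _ | _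
      · right; constructor
        · simp [hvv, hb]
        · rw [hT n, hb]; simp
      · left; constructor
        · simp [hvv, hb]
        · rw [hT n, hb]; simp
    -- edges along [i,j) pairwise distinct
    have hedist : ∀ a b, a < b → b < j → (g a).1.1 ≠ (g b).1.1 := by
      intro a b hab hbj heq
      set e := (g a).1.1 with he
      have hstne : s e ≠ t e := hloop e (hE a)
      have hda := hends a
      have hdb := hends b
      rw [← heq] at hdb
      -- case analysis
      have hvaa : vv a ≠ vv (a+1) := by
        rcases hda with ⟨h1, h2⟩ | ⟨h1, h2⟩ <;> rw [h1, h2]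
        · exact hstne
        · exact hstne.symm
      rcases hda with ⟨ha1, ha2⟩ | ⟨ha1, ha2⟩ <;> rcases hdb with ⟨hb1, hb2⟩ | ⟨hb1, hb2⟩
      · exact hinj a b hab hbj (ha1.trans hb1.symm)
      · -- vv a = s e = vv (b+1), vv (a+1) = t e = vv b
        have h1 : vv (a+1) = vv b := ha2.trans hb1.symm
        rcases lt_or_eq_of_le (Nat.succ_le_of_lt hab) with h | h
        · exact hinj (a+1) b h hbj h1
        · exact hNB a (by rw [show a + 1 = b from h, ← heq])
      · have h1 : vv (a+1) = vv b := ha2.trans hb1.symm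
        rcases lt_or_eq_of_le (Nat.succ_le_of_lt hab) with h | h
        · exact hinj (a+1) b h hbj h1
        · exact hNB a (by rw [show a + 1 = b from h, ← heq])
      · exact hinj a b hab hbj (ha1.trans hb1.symm)
    refine ⟨∑ k ∈ Finset.Ico i j, Finsupp.single (g k).1.1 (if (g k).1.2 then (1:ℝ) else -1),
      ?_, ?_, ?_⟩
    · intro h0
      have happ : (∑ k ∈ Finset.Ico i j,
          Finsupp.single (g k).1.1 (if (g k).1.2 then (1:ℝ) else -1)) (g i).1.1 = 0 := by
        rw [h0]; rfl
      rw [Finset.sum_apply'] at happ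
      rw [Finset.sum_eq_single_of_mem i (Finset.mem_Ico.2 ⟨le_refl i, hij⟩)] at happ
      · rcases hb : (g i).1.2 with _ | _ <;> rw [hb] at happ <;> simp at happ
      · intro k hk hki
        have hkj := (Finset.mem_Ico.1 hk).2
        have : (g k).1.1 ≠ (g i).1.1 := by
          rcases hki.lt_or_gt with h | h
          · exact hedist k i h hij
          · exact (hedist i k h hkj).symm
        exact Finsupp.single_eq_of_ne' this
    · intro x hx
      obtain ⟨k, hk, hxk⟩ := Finset.mem_biUnion.1 (Finsupp.support_finset_sum hx)
      have := Finsupp.support_single_subset hxk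
      rw [Finset.mem_singleton] at this
      rw [this]
      exact hE k
    · have hmap : graphBoundary s t (∑ k ∈ Finset.Ico i j,
          Finsupp.single (g k).1.1 (if (g k).1.2 then (1:ℝ) else -1)) =
          ∑ k ∈ Finset.Ico i j, graphBoundary s t
            (Finsupp.single (g k).1.1 (if (g k).1.2 then (1:ℝ) else -1)) :=
        map_sum (gBhom s t) _ _
      rw [hmap]
      have hterm : ∀ k, graphBoundary s t
          (Finsupp.single (g k).1.1 (if (g k).1.2 then (1:ℝ) else -1)) =
          Finsupp.single (vv (k+1)) (1:ℝ) - Finsupp.single (vv k) 1 := by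
        intro k
        rw [gB_single, hT k]
        rcases hb : (g k).1.2 with _ | _
        · simp only [hvv, hb, Bool.false_eq_true, if_false]
          rw [Finsupp.single_neg, Finsupp.single_neg]
          abel
        · simp [hvv, hb]
      calc ∑ k ∈ Finset.Ico i j, graphBoundary s t
            (Finsupp.single (g k).1.1 (if (g k).1.2 then (1:ℝ) else -1))
          = ∑ k ∈ Finset.Ico i j,
            (Finsupp.single (vv (k+1)) (1:ℝ) - Finsupp.single (vv k) 1) :=
            Finset.sum_congr rfl (fun k _ => hterm k)
        _ = Finsupp.single (vv j) 1 - Finsupp.single (vv i) 1 :=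
            telescope _ i j (le_of_lt hij)
        _ = 0 := by rw [hvij, sub_self]


lemma improve {β : E →₀ ℝ} (hβ : ∀ v, graphBoundary s t β v ∈ K)
    (hne : (frac β).Nonempty) :
    ∃ β' : E →₀ ℝ, graphBoundary s t β' = graphBoundary s t β ∧
      (∑ e ∈ β'.support, |β' e|) ≤ (∑ e ∈ β.support, |β e|) ∧
      (frac β').card < (frac β).card := by
  classical
  obtain ⟨σ₀, hσ₀0, hσ₀supp, hσ₀bd⟩ := exists_cycle s t hβ hne
  -- reduce to the case of nonpositive slope
  have key : ∀ σ : E →₀ ℝ, σ ≠ 0 → σ.support ⊆ frac β → graphBoundary s t σ = 0 →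
      (∑ e ∈ σ.support, (if 0 < β e then σ e else -σ e)) ≤ 0 →
      ∃ β' : E →₀ ℝ, graphBoundary s t β' = graphBoundary s t β ∧
        (∑ e ∈ β'.support, |β' e|) ≤ (∑ e ∈ β.support, |β e|) ∧
        (frac β').card < (frac β).card := by
    intro σ hσ0 hσsupp hσbd hS
    have hsne : σ.support.Nonempty := Finsupp.support_nonempty_iff.2 hσ0
    have hfr : ∀ e ∈ σ.support, β e ∉ K := fun e he => mem_frac.1 (hσsupp he)
    have hfl : ∀ e ∈ σ.support, ((⌊β e⌋ : ℝ) < β e) := by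
      intro e he
      rcases lt_or_eq_of_le (Int.floor_le (β e)) with h | h
      · exact h
      · exact absurd (mem_K_iff.2 ⟨⌊β e⌋, h⟩) (hfr e he)
    have hce : ∀ e ∈ σ.support, (β e < (⌈β e⌉ : ℝ)) := by
      intro e he
      rcases lt_or_eq_of_le (Int.le_ceil (β e)) with h | h
      · exact h
      · exact absurd (mem_K_iff.2 ⟨⌈β e⌉, h.symm⟩) (hfr e he)
    set θf : E → ℝ := fun e =>
      if 0 < σ e then ((⌈β e⌉ : ℝ) - β e) / σ e else ((⌊β e⌋ : ℝ) - β e) / σ e with hθf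
    set θ : ℝ := σ.support.inf' hsne θf with hθ
    have hθfpos : ∀ e ∈ σ.support, 0 < θf e := by
      intro e he
      have hσe : σ e ≠ 0 := Finsupp.mem_support_iff.1 he
      rw [hθf]
      by_cases h : 0 < σ e
      · simp only [if_pos h]
        exact div_pos (sub_pos.2 (hce e he)) h
      · simp only [if_neg h]
        have hσneg : σ e < 0 := lt_of_le_of_ne (not_lt.1 h) hσe
        exact div_pos_of_neg_of_neg (sub_neg.2 (hfl e he)) hσneg
    have hθpos : 0 < θ := by
      rw [hθ]
      exact (Finset.lt_inf'_iff _).2 hθfpos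
    set β' : E →₀ ℝ := β + θ • σ with hβ'
    have hβ'app : ∀ e, β' e = β e + θ * σ e := by
      intro e; simp [hβ', Finsupp.add_apply, Finsupp.smul_apply, smul_eq_mul]
    -- bounds
    have hbounds : ∀ e, ((⌊β e⌋ : ℝ) ≤ β' e ∧ β' e ≤ (⌈β e⌉ : ℝ)) := by
      intro e
      by_cases he : e ∈ σ.support
      · have hle : θ ≤ θf e := Finset.inf'_le _ he
        have hσe : σ e ≠ 0 := Finsupp.mem_support_iff.1 he
        rw [hβ'app]
        by_cases h : 0 < σ e
        · constructor
          · have : 0 ≤ θ * σ e := le_of_lt (mul_pos hθpos h)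
            linarith [Int.floor_le (β e)]
          · have h1 : θ * σ e ≤ θf e * σ e :=
              mul_le_mul_of_nonneg_right hle (le_of_lt h)
            have h2 : θf e * σ e = (⌈β e⌉ : ℝ) - β e := by
              rw [hθf]; simp only [if_pos h]; field_simp
            linarith
        · have hσneg : σ e < 0 := lt_of_le_of_ne (not_lt.1 h) hσe
          constructor
          · have h1 : θf e * σ e ≤ θ * σ e :=
              mul_le_mul_of_nonpos_right hle (le_of_lt hσneg)
            have h2 : θf e * σ e = (⌊β e⌋ : ℝ) - β e := by
              rw [hθf]; simp only [if_neg h]; field_simp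
            linarith
          · have : θ * σ e ≤ 0 := le_of_lt (mul_neg_of_pos_of_neg hθpos hσneg)
            linarith [Int.le_ceil (β e)]
      · have hσe : σ e = 0 := Finsupp.notMem_support_iff.1 he
        rw [hβ'app, hσe, mul_zero, add_zero]
        exact ⟨Int.floor_le (β e), Int.le_ceil (β e)⟩
    -- per-edge mass formula
    have habs : ∀ e, |β' e| = |β e| + θ * (if 0 < β e then σ e else -σ e) := by
      intro e
      by_cases he : e ∈ σ.support
      · have hβe : β e ∉ K := hfr e he
        have hβe0 : β e ≠ 0 := fun h => hβe (h ▸ K.zero_mem)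
        by_cases h : 0 < β e
        · have hfl0 : (0 : ℝ) ≤ (⌊β e⌋ : ℝ) := by
            have : (0 : ℤ) ≤ ⌊β e⌋ := Int.floor_nonneg.2 (le_of_lt h)
            exact_mod_cast this
          have : 0 ≤ β' e := le_trans hfl0 (hbounds e).1
          rw [abs_of_nonneg this, abs_of_pos h, hβ'app, if_pos h]
          try ring
        · have hβneg : β e < 0 := lt_of_le_of_ne (not_lt.1 h) hβe0
          have hce0 : ((⌈β e⌉ : ℝ)) ≤ 0 := by
            have : ⌈β e⌉ ≤ (0 : ℤ) := Int.ceil_le.2 (by push_cast; linarith)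
            exact_mod_cast this
          have : β' e ≤ 0 := le_trans (hbounds e).2 hce0
          rw [abs_of_nonpos this, abs_of_neg hβneg, hβ'app, if_neg h]
          ring
      · have hσe : σ e = 0 := Finsupp.notMem_support_iff.1 he
        rw [hβ'app, hσe, mul_zero, add_zero]
        split_ifs <;> simp [hσe]
    -- mass inequality
    set A : Finset E := β.support ∪ σ.support with hA
    have hsuppβ' : β'.support ⊆ A := by
      refine (Finsupp.support_add).trans ?_
      apply Finset.union_subset_union (le_refl _)
      exact Finsupp.support_smul
    have hmass' : (∑ e ∈ β'.support, |β' e|) = ∑ e ∈ A, |β' e| :=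
      Finset.sum_subset hsuppβ' (by
        intro e _ he
        rw [Finsupp.notMem_support_iff.1 he, abs_zero])
    have hmass : (∑ e ∈ β.support, |β e|) = ∑ e ∈ A, |β e| :=
      Finset.sum_subset (Finset.subset_union_left) (by
        intro e _ he
        rw [Finsupp.notMem_support_iff.1 he, abs_zero])
    have hSA : (∑ e ∈ A, (if 0 < β e then σ e else -σ e)) =
        ∑ e ∈ σ.support, (if 0 < β e then σ e else -σ e) := by
      symm
      apply Finset.sum_subset (Finset.subset_union_right)
      intro e _ he
      have : σ e = 0 := Finsupp.notMem_support_iff.1 he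
      split_ifs <;> simp [this]
    have hmassle : (∑ e ∈ β'.support, |β' e|) ≤ ∑ e ∈ β.support, |β e| := by
      rw [hmass', hmass]
      calc ∑ e ∈ A, |β' e| = ∑ e ∈ A, (|β e| + θ * (if 0 < β e then σ e else -σ e)) :=
            Finset.sum_congr rfl (fun e _ => habs e)
        _ = (∑ e ∈ A, |β e|) + θ * ∑ e ∈ A, (if 0 < β e then σ e else -σ e) := by
            rw [Finset.sum_add_distrib, Finset.mul_sum]
        _ ≤ ∑ e ∈ A, |β e| := by
            rw [hSA]
            nlinarith
    -- fractional count decreases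
    obtain ⟨eb, hebmem, hebeq⟩ := Finset.exists_mem_eq_inf' hsne θf
    have hβ'ebK : β' eb ∈ K := by
      have hσeb : σ eb ≠ 0 := Finsupp.mem_support_iff.1 hebmem
      rw [hβ'app, hθ, hebeq, hθf]
      by_cases h : 0 < σ eb
      · simp only [if_pos h]
        rw [div_mul_cancel₀ _ hσeb]
        exact mem_K_iff.2 ⟨⌈β eb⌉, by ring⟩
      · simp only [if_neg h]
        rw [div_mul_cancel₀ _ hσeb]
        exact mem_K_iff.2 ⟨⌊β eb⌋, by ring⟩
    have hsub : frac β' ⊆ frac β := by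
      intro x hx
      by_cases hxσ : x ∈ σ.support
      · exact hσsupp hxσ
      · have hσx : σ x = 0 := Finsupp.notMem_support_iff.1 hxσ
        have : β' x = β x := by rw [hβ'app, hσx, mul_zero, add_zero]
        exact mem_frac.2 (this ▸ mem_frac.1 hx)
    have heb_in : eb ∈ frac β := hσsupp hebmem
    have heb_out : eb ∉ frac β' := fun h => (mem_frac.1 h) hβ'ebK
    refine ⟨β', ?_, hmassle, ?_⟩
    · rw [hβ', gB_add, gB_smul, hσbd, smul_zero, add_zero]
    · exact Finset.card_lt_card ((Finset.ssubset_iff_of_subset hsub).2 ⟨eb, heb_in, heb_out⟩)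
  by_cases h : (∑ e ∈ σ₀.support, (if 0 < β e then σ₀ e else -σ₀ e)) ≤ 0
  · exact key σ₀ hσ₀0 hσ₀supp hσ₀bd h
  · apply key (-σ₀) (neg_ne_zero.2 hσ₀0)
      (by rw [Finsupp.support_neg]; exact hσ₀supp)
      (by rw [← gBhom_apply, map_neg, gBhom_apply, hσ₀bd, neg_zero])
    have heq : (∑ e ∈ (-σ₀).support, (if 0 < β e then (-σ₀) e else -((-σ₀) e))) =
        -(∑ e ∈ σ₀.support, (if 0 < β e then σ₀ e else -σ₀ e)) := by
      rw [Finsupp.support_neg, ← Finset.sum_neg_distrib]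
      apply Finset.sum_congr rfl
      intro e _
      split_ifs <;> simp
    rw [heq]
    linarith


lemma round :
    ∀ (n : ℕ) (β : E →₀ ℝ), (frac β).card = n →
      (∀ v, graphBoundary s t β v ∈ K) →
      ∃ γ : E →₀ ℤ,
        graphBoundary s t (Finsupp.mapRange (Int.cast : ℤ → ℝ) Int.cast_zero γ)
          = graphBoundary s t β ∧
        (∑ e ∈ γ.support, |(γ e : ℝ)|) ≤ ∑ e ∈ β.support, |β e| := by
  intro n
  induction n using Nat.strong_induction_on with
  | _ n ih =>
    intro β hcard hβ
    by_cases hne : (frac β).Nonempty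
    · obtain ⟨β', hbd, hmass, hlt⟩ := improve s t hβ hne
      have hβ' : ∀ v, graphBoundary s t β' v ∈ K := fun v => hbd ▸ hβ v
      obtain ⟨γ, hγbd, hγmass⟩ :=
        ih (frac β').card (hcard ▸ hlt) β' rfl hβ'
      exact ⟨γ, hγbd.trans hbd, le_trans hγmass hmass⟩
    · -- β is integral
      have hK : ∀ e, β e ∈ K := by
        intro e
        by_cases he : e ∈ β.support
        · by_contra h
          exact hne ⟨e, mem_frac.2 h⟩
        · rw [Finsupp.notMem_support_iff.1 he]; exact K.zero_mem
      set γ : E →₀ ℤ := Finsupp.onFinset β.support (fun e => ⌊β e⌋)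
        (fun e h => Finsupp.mem_support_iff.2 (by
          intro h0
          apply h
          show ⌊β e⌋ = 0
          rw [h0, Int.floor_zero])) with hγ
      have hγapp : ∀ e, ((γ e : ℝ)) = β e := by
        intro e
        rcases mem_K_iff.1 (hK e) with ⟨m, hm⟩
        have : ⌊β e⌋ = m := by rw [← hm, Int.floor_intCast]
        simp [hγ, Finsupp.onFinset_apply, this, hm]
      have hmr : Finsupp.mapRange (Int.cast : ℤ → ℝ) Int.cast_zero γ = β := by
        ext e
        rw [Finsupp.mapRange_apply, hγapp]
      refine ⟨γ, by rw [hmr], ?_⟩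
      have hsupp : γ.support ⊆ β.support := Finsupp.support_onFinset_subset
      calc (∑ e ∈ γ.support, |(γ e : ℝ)|) = ∑ e ∈ γ.support, |β e| :=
            Finset.sum_congr rfl (fun e _ => by rw [hγapp])
        _ ≤ ∑ e ∈ β.support, |β e| :=
            Finset.sum_le_sum_of_subset_of_nonneg hsupp (fun e _ _ => abs_nonneg _)

lemma exists_path (hconn : ∀ u v : V, Relation.ReflTransGen (graphAdj s t) u v)
    (u v : V) :
    ∃ p : E →₀ ℤ, graphBoundary s t p = Finsupp.single v 1 - Finsupp.single u 1 := by
  induction hconn u v with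
  | refl => exact ⟨0, by rw [gB_zero, sub_self]⟩
  | tail huw hwv ih =>
      obtain ⟨p, hp⟩ := ih
      obtain ⟨e, he⟩ := hwv
      rcases he with ⟨hs, ht⟩ | ⟨hs, ht⟩
      · refine ⟨p + Finsupp.single e 1, ?_⟩
        rw [gB_add, hp, gB_single, hs, ht]
        abel
      · refine ⟨p - Finsupp.single e 1, ?_⟩
        rw [← gBhom_apply, map_sub, gBhom_apply, gBhom_apply, hp, gB_single, hs, ht]
        abel

lemma exists_filling (hconn : ∀ u v : V, Relation.ReflTransGen (graphAdj s t) u v)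
    (c : V →₀ ℤ) (hc : c.sum (fun _ n => n) = 0) :
    ∃ γ : E →₀ ℤ, graphBoundary s t γ = c := by
  classical
  by_cases hV : Nonempty V
  · obtain ⟨u₀⟩ := hV
    choose p hp using exists_path s t hconn u₀
    refine ⟨∑ v ∈ c.support, c v • p v, ?_⟩
    have : graphBoundary s t (∑ v ∈ c.support, c v • p v)
        = ∑ v ∈ c.support, c v • graphBoundary s t (p v) := by
      rw [← gBhom_apply, map_sum]
      apply Finset.sum_congr rfl
      intro v _
      rw [AddMonoidHom.map_zsmul, gBhom_apply]
    rw [this]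
    have : ∑ v ∈ c.support, c v • graphBoundary s t (p v)
        = (∑ v ∈ c.support, Finsupp.single v (c v))
          - (∑ v ∈ c.support, c v) • Finsupp.single u₀ (1 : ℤ) := by
      rw [Finset.sum_smul, ← Finset.sum_sub_distrib]
      apply Finset.sum_congr rfl
      intro v _
      rw [hp v, smul_sub]
      congr 1
      rw [Finsupp.smul_single, smul_eq_mul, mul_one]
    rw [this]
    have hzero : (∑ v ∈ c.support, c v) = 0 := hc
    rw [hzero, zero_smul, sub_zero]
    exact Finsupp.sum_single c
  · refine ⟨0, ?_⟩
    rw [gB_zero]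
    ext v
    exact absurd ⟨v⟩ hV

lemma mass_cast (γ : E →₀ ℤ) :
    ((∑ e ∈ γ.support, (γ e).natAbs : ℕ) : ℝ) = ∑ e ∈ γ.support, |(γ e : ℝ)| := by
  push_cast
  apply Finset.sum_congr rfl
  intro e _
  push_cast [Nat.cast_natAbs]
  rfl

end IntegralFilling

open IntegralFilling in
/-- In a connected graph `X`, the infimum of the ℓ¹-norm over real
1-chains `β` with `∂β = c`, where `c` is an integral 0-cycle (finitely supported,
total sum zero), is attained by an integral 1-chain. -/
theorem integral_filling_of_zero_cycle_is_mass_minimizing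
    (V E : Type) (s t : E → V)
    (hconn : ∀ u v : V, Relation.ReflTransGen (graphAdj s t) u v)
    (c : V →₀ ℤ) (hc : c.sum (fun _ n => n) = 0) :
    ∃ β₀ : E →₀ ℤ,
      graphBoundary s t (Finsupp.mapRange (Int.cast : ℤ → ℝ) (by simp) β₀) =
        Finsupp.mapRange (Int.cast : ℤ → ℝ) (by simp) c ∧
      IsLeast
        {m : ℝ | ∃ β : E →₀ ℝ,
          graphBoundary s t β = Finsupp.mapRange (Int.cast : ℤ → ℝ) (by simp) c ∧
          m = ∑ e ∈ β.support, |β e|}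
        (∑ e ∈ β₀.support, |(β₀ e : ℝ)|) := by
  classical
  obtain ⟨γ₁, hγ₁⟩ := exists_filling s t hconn c hc
  set T : Set ℕ := {n | ∃ γ : E →₀ ℤ,
    graphBoundary s t (Finsupp.mapRange (Int.cast : ℤ → ℝ) Int.cast_zero γ)
      = Finsupp.mapRange (Int.cast : ℤ → ℝ) Int.cast_zero c ∧
    n = ∑ e ∈ γ.support, (γ e).natAbs} with hT
  have hTne : T.Nonempty :=
    ⟨_, γ₁, by rw [gB_mapRange, hγ₁], rfl⟩
  obtain ⟨β₀, hβ₀bd, hβ₀n⟩ := Nat.sInf_mem hTne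
  have hmasseq : (∑ e ∈ β₀.support, |(β₀ e : ℝ)|) = ((sInf T : ℕ) : ℝ) := by
    rw [hβ₀n, mass_cast]
  refine ⟨β₀, hβ₀bd, ?_, ?_⟩
  · refine ⟨Finsupp.mapRange (Int.cast : ℤ → ℝ) Int.cast_zero β₀, hβ₀bd, ?_⟩
    rw [Finsupp.support_mapRange_of_injective Int.cast_zero β₀ Int.cast_injective]
    apply Finset.sum_congr rfl
    intro e _
    rw [Finsupp.mapRange_apply]
  · intro m hm
    obtain ⟨β, hbd, hmass⟩ := hm
    have hβK : ∀ v, graphBoundary s t β v ∈ K := by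
      intro v
      rw [hbd, Finsupp.mapRange_apply]
      exact mem_K_iff.2 ⟨c v, rfl⟩
    obtain ⟨γ, hγbd, hγmass⟩ := round s t (frac β).card β rfl hβK
    have hγT : (∑ e ∈ γ.support, (γ e).natAbs) ∈ T := ⟨γ, by rw [hγbd, hbd], rfl⟩
    have h1 : sInf T ≤ ∑ e ∈ γ.support, (γ e).natAbs := Nat.sInf_le hγT
    rw [hmass, hmasseq]
    calc ((sInf T : ℕ) : ℝ) ≤ ((∑ e ∈ γ.support, (γ e).natAbs : ℕ) : ℝ) := Nat.cast_le.2 h1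
      _ = ∑ e ∈ γ.support, |(γ e : ℝ)| := mass_cast γ
      _ ≤ ∑ e ∈ β.support, |β e| := hγmass
end

section
/- Suppose G is a group, h : G → Z a surjective homomorphism with kernel H, and h' : G × F₂(u,v) → Z the homomorphism agreeing with h on G and sending both free generators u, v to 1. Then the kernel of h' is isomorphic to the amalgamated free product G *_H G (two copies of G amalgamated along H via the identity). -/
open Multiplicative

namespace KerF2

variable {G : Type} [Group G] (h : G →* Multiplicative ℤ) (g₀ : G)

abbrev P := Monoid.PushoutI (fun _ : Bool => h.ker.subtype)

def oT : G →* P h := Monoid.PushoutI.of (φ := fun _ : Bool => h.ker.subtype) true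
def oF : G →* P h := Monoid.PushoutI.of (φ := fun _ : Bool => h.ker.subtype) false

lemma of_eq_of (x : G) (hx : x ∈ h.ker) : oT h x = oF h x := by
  have h1 := Monoid.PushoutI.of_apply_eq_base (fun _ : Bool => h.ker.subtype) true ⟨x, hx⟩
  have h2 := Monoid.PushoutI.of_apply_eq_base (fun _ : Bool => h.ker.subtype) false ⟨x, hx⟩
  exact h1.trans h2.symm

lemma swap_of {x : G} (hx : x ∈ h.ker) (y : G) :
    oF h y * oT h x = oT h (y * x * y⁻¹) * oF h y := by
  have hx' : y * x * y⁻¹ ∈ h.ker := by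
    simp only [MonoidHom.mem_ker] at hx ⊢
    simp [hx, mul_comm, map_mul]
  rw [of_eq_of h x hx, of_eq_of h _ hx', ← map_mul, ← map_mul]
  congr 1
  group

/-- `c = oT g₀⁻¹ * oF g₀` -/
def cc : P h := (oT h g₀)⁻¹ * oF h g₀

lemma cc_comm (x : G) (hx : x ∈ h.ker) : cc h g₀ * oT h x = oT h x * cc h g₀ :=
  calc (oT h g₀)⁻¹ * oF h g₀ * oT h x
      = (oT h g₀)⁻¹ * (oF h g₀ * oT h x) := mul_assoc _ _ _
    _ = (oT h g₀)⁻¹ * (oT h (g₀ * x * g₀⁻¹) * oF h g₀) := by rw [swap_of h hx g₀]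
    _ = oT h (x * g₀⁻¹) * oF h g₀ := by
        rw [← map_inv, ← mul_assoc, ← map_mul]; congr 2; group
    _ = oT h x * ((oT h g₀)⁻¹ * oF h g₀) := by rw [map_mul, map_inv, mul_assoc]

end KerF2

namespace KerF2

variable {G : Type} [Group G] (h : G →* Multiplicative ℤ) (g₀ : G)

def cc' : P h := oT h g₀ * (oF h g₀)⁻¹

lemma swap_of' {x : G} (hx : x ∈ h.ker) (y : G) :
    (oF h y)⁻¹ * oT h x = oT h (y⁻¹ * x * y) * (oF h y)⁻¹ := by
  have hx' : y⁻¹ * x * y ∈ h.ker := by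
    simp only [MonoidHom.mem_ker] at hx ⊢
    simp [hx, mul_comm, map_mul]
  have e := swap_of h hx' y
  have e2 : y * (y⁻¹ * x * y) * y⁻¹ = x := by group
  rw [e2] at e
  have : oT h (y⁻¹ * x * y) = (oF h y)⁻¹ * oT h x * oF h y := by
    conv_rhs => rw [mul_assoc, ← e]
    group
  rw [this]; group

lemma cc'_comm (x : G) (hx : x ∈ h.ker) : cc' h g₀ * oT h x = oT h x * cc' h g₀ :=
  calc oT h g₀ * (oF h g₀)⁻¹ * oT h x
      = oT h g₀ * ((oF h g₀)⁻¹ * oT h x) := mul_assoc _ _ _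
    _ = oT h g₀ * (oT h (g₀⁻¹ * x * g₀) * (oF h g₀)⁻¹) := by rw [swap_of' h hx g₀]
    _ = oT h (x * g₀) * (oF h g₀)⁻¹ := by
        rw [← mul_assoc, ← map_mul]; congr 2; group
    _ = oT h x * (oT h g₀ * (oF h g₀)⁻¹) := by rw [map_mul, mul_assoc]

/-- the conjugation-flavoured endomorphism -/
def alpha : P h →* P h :=
  Monoid.PushoutI.lift
    (fun b => if b then oT h else (MulAut.conj (cc h g₀)).toMonoidHom.comp (oF h))
    ((oT h).comp h.ker.subtype)
    (by
      intro b
      cases b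
      · ext x
        simp only [MonoidHom.comp_apply, Subgroup.coe_subtype,
          if_neg Bool.false_ne_true, MulAut.conj_apply,
          MonoidHom.coe_comp, Function.comp_apply, MulEquiv.coe_toMonoidHom]
        rw [← of_eq_of h x.1 x.2, cc_comm h g₀ x.1 x.2]
        simp
      · rfl)

def beta : P h →* P h :=
  Monoid.PushoutI.lift
    (fun b => if b then oT h else (MulAut.conj (cc' h g₀)).toMonoidHom.comp (oF h))
    ((oT h).comp h.ker.subtype)
    (by
      intro b
      cases b
      · ext x
        simp only [MonoidHom.comp_apply, Subgroup.coe_subtype,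
          if_neg Bool.false_ne_true, MulAut.conj_apply,
          MonoidHom.coe_comp, Function.comp_apply, MulEquiv.coe_toMonoidHom]
        rw [← of_eq_of h x.1 x.2, cc'_comm h g₀ x.1 x.2]
        simp
      · rfl)

@[simp] lemma alpha_oT (g : G) : alpha h g₀ (oT h g) = oT h g := by
  simp [alpha, oT, Monoid.PushoutI.lift_of]

@[simp] lemma alpha_oF (g : G) : alpha h g₀ (oF h g) = cc h g₀ * oF h g * (cc h g₀)⁻¹ := by
  simp [alpha, oF, Monoid.PushoutI.lift_of]

@[simp] lemma beta_oT (g : G) : beta h g₀ (oT h g) = oT h g := by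
  simp [beta, oT, Monoid.PushoutI.lift_of]

@[simp] lemma beta_oF (g : G) : beta h g₀ (oF h g) = cc' h g₀ * oF h g * (cc' h g₀)⁻¹ := by
  simp [beta, oF, Monoid.PushoutI.lift_of]

end KerF2

section MulAutLemmas

variable {K : Type*} [Group K]

lemma mulaut_fix_zpow (e : MulAut K) (y : K) (hy : e y = y) : ∀ n : ℤ, (e ^ n) y = y := by
  have hinv : e⁻¹ y = y := by
    conv_lhs => rw [← hy]
    rw [← MulAut.mul_apply, inv_mul_cancel, MulAut.one_apply]
  intro n
  induction n using Int.induction_on with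
  | zero => simp
  | succ n ih => rw [zpow_add_one, MulAut.mul_apply, hy, ih]
  | pred n ih => rw [zpow_sub_one, MulAut.mul_apply, hinv, ih]

lemma mulaut_conj_zpow (e : MulAut K) (y x : K) (hy : e y = y)
    (hx : e x = y⁻¹ * x * y) : ∀ n : ℤ, (e ^ n) x = y ^ (-n) * x * y ^ n := by
  have hinv : e⁻¹ x = y * x * y⁻¹ := by
    have : e (y * x * y⁻¹) = x := by
      rw [map_mul, map_mul, map_inv, hy, hx]; group
    conv_lhs => rw [← this]
    rw [← MulAut.mul_apply, inv_mul_cancel, MulAut.one_apply]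
  intro n
  induction n using Int.induction_on with
  | zero => simp
  | succ n ih =>
      rw [zpow_add_one, MulAut.mul_apply, hx, map_mul, map_mul, map_inv,
        mulaut_fix_zpow e y hy (n : ℤ), ih]
      group
  | pred n ih =>
      rw [zpow_sub_one, MulAut.mul_apply, hinv, map_mul, map_mul, map_inv,
        mulaut_fix_zpow e y hy (-n : ℤ), ih]
      group

end MulAutLemmas

namespace KerF2

variable {G : Type} [Group G] (h : G →* Multiplicative ℤ) (g₀ : G)

lemma alpha_cc' : alpha h g₀ (cc' h g₀) = (cc h g₀)⁻¹ := by
  simp only [cc', map_mul, map_inv, alpha_oT, alpha_oF, cc]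
  group

lemma beta_cc : beta h g₀ (cc h g₀) = (cc' h g₀)⁻¹ := by
  simp only [cc, map_mul, map_inv, beta_oT, beta_oF, cc']
  group

lemma beta_comp_alpha : (beta h g₀).comp (alpha h g₀) = MonoidHom.id _ := by
  apply Monoid.PushoutI.hom_ext_nonempty
  intro b
  cases b <;> ext g <;>
    simp only [MonoidHom.comp_apply, MonoidHom.id_apply]
  · show beta h g₀ (alpha h g₀ (oF h g)) = oF h g
    rw [alpha_oF, map_mul, map_mul, map_inv, beta_cc, beta_oF]
    group
  · show beta h g₀ (alpha h g₀ (oT h g)) = oT h g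
    rw [alpha_oT, beta_oT]

lemma alpha_comp_beta : (alpha h g₀).comp (beta h g₀) = MonoidHom.id _ := by
  apply Monoid.PushoutI.hom_ext_nonempty
  intro b
  cases b <;> ext g <;>
    simp only [MonoidHom.comp_apply, MonoidHom.id_apply]
  · show alpha h g₀ (beta h g₀ (oF h g)) = oF h g
    rw [beta_oF, map_mul, map_mul, map_inv, alpha_cc', alpha_oF]
    group
  · show alpha h g₀ (beta h g₀ (oT h g)) = oT h g
    rw [beta_oT, alpha_oT]

/-- the automorphism of the pushout corresponding to conjugation by `u` -/
def A : MulAut (P h) :=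
  MonoidHom.toMulEquiv (alpha h g₀) (beta h g₀) (beta_comp_alpha h g₀) (alpha_comp_beta h g₀)

@[simp] lemma A_apply (x : P h) : A h g₀ x = alpha h g₀ x := rfl

def phiA : Multiplicative ℤ →* MulAut (P h) := zpowersHom (MulAut (P h)) (A h g₀)

end KerF2

namespace KerF2

variable {G : Type} [Group G] (h : G →* Multiplicative ℤ) (g₀ : G)

def jj (b : Bool) : G →* G × FreeGroup Bool :=
  (MonoidHom.id G).prod ((zpowersHom (FreeGroup Bool) (FreeGroup.of b)⁻¹).comp h)

lemma jj_apply (b : Bool) (g : G) :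
    jj h b g = (g, (FreeGroup.of b)⁻¹ ^ (h g).toAdd) := rfl

def f1 : P h →* G × FreeGroup Bool :=
  Monoid.PushoutI.lift (fun b => jj h b) ((jj h true).comp h.ker.subtype)
    (by
      intro b
      cases b
      · refine MonoidHom.ext fun x => ?_
        have hx : h (x : G) = 1 := x.2
        show jj h false (x : G) = jj h true (x : G)
        rw [jj_apply, jj_apply, hx]; simp
      · rfl)

@[simp] lemma f1_oT (g : G) : f1 h (oT h g) = (g, (FreeGroup.of true)⁻¹ ^ (h g).toAdd) := by
  simp [f1, oT, Monoid.PushoutI.lift_of, jj_apply]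

@[simp] lemma f1_oF (g : G) : f1 h (oF h g) = (g, (FreeGroup.of false)⁻¹ ^ (h g).toAdd) := by
  simp [f1, oF, Monoid.PushoutI.lift_of, jj_apply]

/-- the element `(1, u)` -/
def tu : G × FreeGroup Bool := (1, FreeGroup.of true)

variable (hg₀ : h g₀ = Multiplicative.ofAdd 1)

include hg₀ in
lemma f1_cc : f1 h (cc h g₀) = (1, FreeGroup.of true * (FreeGroup.of false)⁻¹) := by
  have : (h g₀).toAdd = 1 := by rw [hg₀]; rfl
  simp [cc, map_mul, map_inv, this, Prod.ext_iff]

include hg₀ in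
lemma f1_alpha_hom :
    (f1 h).comp (alpha h g₀) = (MulAut.conj (tu (G := G))).toMonoidHom.comp (f1 h) := by
  apply Monoid.PushoutI.hom_ext_nonempty
  intro b
  cases b
  · refine MonoidHom.ext fun g => ?_
    show f1 h (alpha h g₀ (oF h g)) = MulAut.conj (tu (G := G)) (f1 h (oF h g))
    rw [alpha_oF, map_mul, map_mul, map_inv, f1_cc h g₀ hg₀, f1_oF, MulAut.conj_apply]
    simp only [tu, Prod.ext_iff, Prod.fst_mul, Prod.snd_mul, Prod.fst_inv, Prod.snd_inv]
    constructor
    · group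
    · group
  · refine MonoidHom.ext fun g => ?_
    show f1 h (alpha h g₀ (oT h g)) = MulAut.conj (tu (G := G)) (f1 h (oT h g))
    rw [alpha_oT, f1_oT, MulAut.conj_apply]
    simp only [tu, Prod.ext_iff, Prod.fst_mul, Prod.snd_mul, Prod.fst_inv, Prod.snd_inv]
    constructor
    · group
    · group

include hg₀ in
lemma f1_alpha (x : P h) : f1 h (alpha h g₀ x) = tu * f1 h x * tu⁻¹ := by
  have := DFunLike.congr_fun (f1_alpha_hom h g₀ hg₀) x
  simpa using this

include hg₀ in
lemma f1_A_zpow (n : ℤ) (x : P h) :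
    f1 h ((A h g₀ ^ n) x) = tu ^ n * f1 h x * tu ^ (-n) := by
  have hAinv : ∀ y : P h, f1 h ((A h g₀)⁻¹ y) = tu⁻¹ * f1 h y * tu := by
    intro y
    have := f1_alpha h g₀ hg₀ ((A h g₀)⁻¹ y)
    have h2 : alpha h g₀ ((A h g₀)⁻¹ y) = y := by
      show A h g₀ ((A h g₀)⁻¹ y) = y
      rw [← MulAut.mul_apply, mul_inv_cancel, MulAut.one_apply]
    rw [h2] at this
    rw [this]; group
  induction n using Int.induction_on with
  | zero => simp
  | succ n ih =>
      have : ((n : ℤ) + 1) = 1 + (n : ℤ) := by ring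
      rw [this, zpow_add, MulAut.mul_apply, zpow_one, A_apply, f1_alpha h g₀ hg₀, ih]
      group
  | pred n ih =>
      have : ((-n : ℤ) - 1) = -1 + (-n : ℤ) := by ring
      rw [this, zpow_add, MulAut.mul_apply, zpow_neg_one, hAinv, ih]
      group

end KerF2

namespace KerF2

open SemidirectProduct

variable {G : Type} [Group G] (h : G →* Multiplicative ℤ) (g₀ : G)

lemma alpha_cc_conj : alpha h g₀ (cc h g₀) = (oT h g₀)⁻¹ * cc h g₀ * oT h g₀ := by
  simp only [cc, map_mul, map_inv, alpha_oT, alpha_oF]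
  group

lemma A_cc : A h g₀ (cc h g₀) = (oT h g₀)⁻¹ * cc h g₀ * oT h g₀ := alpha_cc_conj h g₀

lemma A_oT (g : G) : A h g₀ (oT h g) = oT h g := alpha_oT h g₀ g

lemma A_zpow_oT (n : ℤ) (g : G) : (A h g₀ ^ n) (oT h g) = oT h g :=
  mulaut_fix_zpow (A h g₀) (oT h g) (A_oT h g₀ g) n

lemma A_zpow_cc (n : ℤ) :
    (A h g₀ ^ n) (cc h g₀) = (oT h g₀) ^ (-n) * cc h g₀ * (oT h g₀) ^ n :=
  mulaut_conj_zpow (A h g₀) (oT h g₀) (cc h g₀) (A_oT h g₀ g₀) (A_cc h g₀) n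

lemma A_zpow_cc_inv (n : ℤ) :
    (A h g₀ ^ n) (cc h g₀)⁻¹ = (oT h g₀) ^ (-n) * (cc h g₀)⁻¹ * (oT h g₀) ^ n := by
  rw [map_inv, A_zpow_cc]
  group

variable (hg₀ : h g₀ = Multiplicative.ofAdd 1)

include hg₀ in
lemma theta_compat : ∀ z : Multiplicative ℤ,
    (f1 h).comp ((phiA h g₀ z).toMonoidHom) =
      (MulAut.conj (zpowersHom (G × FreeGroup Bool) (tu (G := G)) z)).toMonoidHom.comp (f1 h) := by
  intro z
  refine MonoidHom.ext fun x => ?_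
  show f1 h ((phiA h g₀ z) x) = MulAut.conj (tu ^ z.toAdd) (f1 h x)
  have : phiA h g₀ z = A h g₀ ^ z.toAdd := rfl
  rw [this, f1_A_zpow h g₀ hg₀ z.toAdd x, MulAut.conj_apply, zpow_neg]

def theta : (P h ⋊[phiA h g₀] Multiplicative ℤ) →* G × FreeGroup Bool :=
  SemidirectProduct.lift (f1 h) (zpowersHom (G × FreeGroup Bool) (tu (G := G)))
    (theta_compat h g₀ hg₀)

@[simp] lemma theta_inl (x : P h) : theta h g₀ hg₀ (inl x) = f1 h x := by
  simp [theta]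

@[simp] lemma theta_inr (z : Multiplicative ℤ) :
    theta h g₀ hg₀ (inr z) = tu ^ z.toAdd := by
  simp [theta]

def j1 : G →* (P h ⋊[phiA h g₀] Multiplicative ℤ) where
  toFun g := ⟨oT h g, h g⟩
  map_one' := by
    ext <;> simp
  map_mul' a b := by
    have : phiA h g₀ (h a) (oT h b) = oT h b := A_zpow_oT h g₀ (h a).toAdd b
    ext
    · simp [mul_left, this]
    · simp [mul_right]

def j2 : FreeGroup Bool →* (P h ⋊[phiA h g₀] Multiplicative ℤ) :=
  FreeGroup.lift (fun b =>
    if b then inr (Multiplicative.ofAdd 1) else ⟨(cc h g₀)⁻¹, Multiplicative.ofAdd 1⟩)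

@[simp] lemma j2_true : j2 h g₀ (FreeGroup.of true) = inr (Multiplicative.ofAdd 1) := by
  simp [j2]

@[simp] lemma j2_false :
    j2 h g₀ (FreeGroup.of false) = ⟨(cc h g₀)⁻¹, Multiplicative.ofAdd 1⟩ := by
  simp [j2]

include hg₀ in
lemma comm_j (g : G) (w : FreeGroup Bool) : Commute (j1 h g₀ g) (j2 h g₀ w) := by
  refine FreeGroup.induction_on w ?_ ?_ ?_ ?_
  · simp only [map_one]; exact Commute.one_right (j1 h g₀ g)
  · intro b
    cases b
    · rw [j2_false]
      have m := (h g).toAdd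
      have key : oT h g * phiA h g₀ (h g) (cc h g₀)⁻¹ = (cc h g₀)⁻¹ * oT h g := by
        have e1 : phiA h g₀ (h g) (cc h g₀)⁻¹ =
            (oT h g₀) ^ (-(h g).toAdd) * (cc h g₀)⁻¹ * (oT h g₀) ^ (h g).toAdd :=
          A_zpow_cc_inv h g₀ (h g).toAdd
        have hker : g * g₀ ^ (-(h g).toAdd) ∈ h.ker := by
          simp only [MonoidHom.mem_ker, map_mul, map_zpow, hg₀]
          rw [← ofAdd_zsmul]
          simp
        have e2 : Commute ((cc h g₀)⁻¹) (oT h (g * g₀ ^ (-(h g).toAdd))) :=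
          (Commute.inv_left (cc_comm h g₀ _ hker))
        calc oT h g * phiA h g₀ (h g) (cc h g₀)⁻¹
            = (oT h g * (oT h g₀) ^ (-(h g).toAdd)) * (cc h g₀)⁻¹ * (oT h g₀) ^ ((h g).toAdd) := by
              rw [e1]; group
          _ = oT h (g * g₀ ^ (-(h g).toAdd)) * (cc h g₀)⁻¹ * (oT h g₀) ^ ((h g).toAdd) := by
              rw [map_mul, map_zpow]
          _ = (cc h g₀)⁻¹ * (oT h (g * g₀ ^ (-(h g).toAdd)) * oT h (g₀ ^ ((h g).toAdd))) := by
              rw [e2.symm.eq, map_zpow, mul_assoc]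
          _ = (cc h g₀)⁻¹ * oT h g := by
              rw [← map_mul]
              congr 1
              group
      ext
      · simp only [mul_left]
        exact key.trans (by
          have : phiA h g₀ (Multiplicative.ofAdd 1) (oT h g) = oT h g :=
            A_zpow_oT h g₀ _ g
          simp [j1, this])
      · simp [j1, mul_right, mul_comm]
    · rw [j2_true]
      have : phiA h g₀ (Multiplicative.ofAdd 1) (oT h g) = oT h g := A_zpow_oT h g₀ _ g
      ext
      · simp [j1, mul_left, this, A_zpow_oT]
      · simp [j1, mul_right, mul_comm]
  · intro b hb
    rw [map_inv]
    exact hb.inv_right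
  · intro x y hx hy
    rw [map_mul]
    exact hx.mul_right hy

include hg₀ in
def theta' : G × FreeGroup Bool →* (P h ⋊[phiA h g₀] Multiplicative ℤ) where
  toFun x := j1 h g₀ x.1 * j2 h g₀ x.2
  map_one' := by simp
  map_mul' a b := by
    show j1 h g₀ (a.1 * b.1) * j2 h g₀ (a.2 * b.2) = _
    rw [map_mul, map_mul]
    have := (comm_j h g₀ hg₀ b.1 a.2).eq
    calc j1 h g₀ a.1 * j1 h g₀ b.1 * (j2 h g₀ a.2 * j2 h g₀ b.2)
        = j1 h g₀ a.1 * (j1 h g₀ b.1 * j2 h g₀ a.2) * j2 h g₀ b.2 := by group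
      _ = j1 h g₀ a.1 * (j2 h g₀ a.2 * j1 h g₀ b.1) * j2 h g₀ b.2 := by rw [this]
      _ = _ := by group

end KerF2

namespace KerF2

open SemidirectProduct Multiplicative

variable {G : Type} [Group G] (h : G →* Multiplicative ℤ) (g₀ : G)

lemma alpha_oF_g₀ : alpha h g₀ (oF h g₀) = (oT h g₀)⁻¹ * oF h g₀ * oT h g₀ := by
  rw [alpha_oF]
  simp only [cc]
  group

lemma A_zpow_oF_g₀ (n : ℤ) :
    (A h g₀ ^ n) (oF h g₀) = (oT h g₀) ^ (-n) * oF h g₀ * (oT h g₀) ^ n :=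
  mulaut_conj_zpow (A h g₀) (oT h g₀) (oF h g₀) (A_oT h g₀ g₀) (alpha_oF_g₀ h g₀) n

@[simp] lemma phiA_apply (z : Multiplicative ℤ) (x : P h) :
    phiA h g₀ z x = (A h g₀ ^ z.toAdd) x := rfl

lemma j2_false_zpow (n : ℤ) :
    (j2 h g₀ (FreeGroup.of false)) ^ n =
      ⟨(oF h g₀) ^ (-n) * (oT h g₀) ^ n, Multiplicative.ofAdd n⟩ := by
  induction n using Int.induction_on with
  | zero =>
      ext <;> simp
  | succ n ih =>
      rw [zpow_add_one, ih, j2_false]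
      ext
      · rw [mul_left]
        show (oF h g₀) ^ (-(n:ℤ)) * (oT h g₀) ^ (n:ℤ) *
          phiA h g₀ (ofAdd (n:ℤ)) (cc h g₀)⁻¹ = _
        rw [phiA_apply, toAdd_ofAdd, A_zpow_cc_inv]
        show _ = (oF h g₀) ^ (-((n:ℤ)+1)) * (oT h g₀) ^ ((n:ℤ)+1)
        simp only [cc, mul_inv_rev, inv_inv]
        group
      · rw [mul_right]
        show ofAdd (n : ℤ) * ofAdd (1 : ℤ) = ofAdd ((n : ℤ) + 1)
        rw [← ofAdd_add]
  | pred n ih =>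
      rw [zpow_sub_one, ih, j2_false]
      have hinv : (⟨(cc h g₀)⁻¹, Multiplicative.ofAdd (1:ℤ)⟩ :
          P h ⋊[phiA h g₀] Multiplicative ℤ)⁻¹ =
          ⟨(A h g₀ ^ (-1 : ℤ)) (cc h g₀), Multiplicative.ofAdd (-1 : ℤ)⟩ := by
        ext
        · rw [inv_left]
          show phiA h g₀ (ofAdd (1:ℤ))⁻¹ ((cc h g₀)⁻¹)⁻¹ = _
          rw [inv_inv, phiA_apply]
          norm_num
        · rfl
      rw [hinv]
      ext
      · rw [mul_left]
        show (oF h g₀) ^ (-(-n:ℤ)) * (oT h g₀) ^ (-n:ℤ) *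
          phiA h g₀ (ofAdd (-n:ℤ)) ((A h g₀ ^ (-1:ℤ)) (cc h g₀)) = _
        rw [phiA_apply, toAdd_ofAdd, ← MulAut.mul_apply, ← zpow_add, A_zpow_cc]
        show _ = (oF h g₀) ^ (-(-(n:ℤ)-1)) * (oT h g₀) ^ (-(n:ℤ)-1)
        simp only [cc]
        group
      · rw [mul_right]
        simp [div_eq_mul_inv]

end KerF2

namespace KerF2

open SemidirectProduct Multiplicative

variable {G : Type} [Group G] (h : G →* Multiplicative ℤ) (g₀ : G)
variable (hg₀ : h g₀ = Multiplicative.ofAdd 1)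

include hg₀ in
lemma theta'_comp_theta :
    (theta' h g₀ hg₀).comp (theta h g₀ hg₀) = MonoidHom.id _ := by
  apply SemidirectProduct.hom_ext
  · apply Monoid.PushoutI.hom_ext_nonempty
    intro b
    cases b
    · refine MonoidHom.ext fun g => ?_
      show theta' h g₀ hg₀ (theta h g₀ hg₀ (inl (oF h g))) = inl (oF h g)
      rw [theta_inl, f1_oF]
      show j1 h g₀ g * j2 h g₀ ((FreeGroup.of false)⁻¹ ^ (h g).toAdd) = inl (oF h g)
      rw [inv_zpow, ← zpow_neg, map_zpow, j2_false_zpow]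
      have hker : g * g₀ ^ (-(h g).toAdd) ∈ h.ker := by
        simp only [MonoidHom.mem_ker, map_mul, map_zpow, hg₀]
        rw [← ofAdd_zsmul]
        simp
      ext
      · rw [mul_left]
        show oT h g * phiA h g₀ (h g) ((oF h g₀) ^ (-(-(h g).toAdd)) *
          (oT h g₀) ^ (-(h g).toAdd)) = oF h g
        rw [phiA_apply, map_mul, map_zpow, map_zpow, A_zpow_oF_g₀, A_zpow_oT]
        have e1 : oT h g * ((oT h g₀ ^ (-(h g).toAdd) * oF h g₀ * oT h g₀ ^ (h g).toAdd) ^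
            (-(-(h g).toAdd)) * (oT h g₀) ^ (-(h g).toAdd)) =
            oT h (g * g₀ ^ (-(h g).toAdd)) * (oF h g₀) ^ ((h g).toAdd) := by
          rw [map_mul, map_zpow]
          have conj' : ∀ (a x : P h) (k : ℤ), (a⁻¹ * x * a) ^ k = a⁻¹ * x ^ k * a := by
            intro a x k
            calc (a⁻¹ * x * a) ^ k = (a⁻¹ * x * (a⁻¹)⁻¹) ^ k := by rw [inv_inv]
              _ = a⁻¹ * x ^ k * (a⁻¹)⁻¹ := conj_zpow
              _ = a⁻¹ * x ^ k * a := by rw [inv_inv]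
          have e0 : (oT h g₀) ^ (-(h g).toAdd) = ((oT h g₀) ^ ((h g).toAdd))⁻¹ := by
            rw [zpow_neg]
          rw [e0, conj']
          group
        rw [e1, of_eq_of h _ hker, ← map_zpow, ← map_mul]
        congr 1
        group
      · rw [mul_right]
        show h g * ofAdd (-(h g).toAdd) = 1
        rw [← ofAdd_toAdd (h g), ← ofAdd_add]
        simp
    · refine MonoidHom.ext fun g => ?_
      show theta' h g₀ hg₀ (theta h g₀ hg₀ (inl (oT h g))) = inl (oT h g)
      rw [theta_inl, f1_oT]
      show j1 h g₀ g * j2 h g₀ ((FreeGroup.of true)⁻¹ ^ (h g).toAdd) = inl (oT h g)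
      rw [inv_zpow, ← zpow_neg, map_zpow, j2_true, ← map_zpow]
      have hz : (ofAdd (1:ℤ)) ^ (-(h g).toAdd) = ofAdd (-(h g).toAdd) := by
        rw [← ofAdd_zsmul]; simp
      rw [hz]
      ext
      · rw [mul_left]
        show oT h g * phiA h g₀ (h g) (1 : P h) = oT h g
        rw [map_one, mul_one]
      · rw [mul_right]
        show h g * ofAdd (-(h g).toAdd) = 1
        rw [← ofAdd_toAdd (h g), ← ofAdd_add]
        simp
  · refine MonoidHom.ext fun z => ?_
    show theta' h g₀ hg₀ (theta h g₀ hg₀ (inr z)) = inr z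
    rw [theta_inr]
    show j1 h g₀ ((1 : G) ^ z.toAdd) * j2 h g₀ ((FreeGroup.of true) ^ z.toAdd) = inr z
    rw [one_zpow, map_one, one_mul, map_zpow, j2_true, ← map_zpow]
    congr 1
    rw [← ofAdd_zsmul]
    simp

include hg₀ in
lemma theta_comp_theta' :
    (theta h g₀ hg₀).comp (theta' h g₀ hg₀) = MonoidHom.id _ := by
  have hj1 : ∀ g : G, theta h g₀ hg₀ (j1 h g₀ g) = (g, 1) := by
    intro g
    show theta h g₀ hg₀ (⟨oT h g, h g⟩) = (g, 1)
    rw [mk_eq_inl_mul_inr, map_mul, theta_inl, theta_inr, f1_oT]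
    rw [Prod.ext_iff]
    constructor
    · simp [tu]
    · show (FreeGroup.of true)⁻¹ ^ (h g).toAdd * (tu (G := G)).2 ^ (h g).toAdd = 1
      simp only [tu]
      group
  have hj2 : ∀ w : FreeGroup Bool, theta h g₀ hg₀ (j2 h g₀ w) = (1, w) := by
    have : (theta h g₀ hg₀).comp (j2 h g₀) = MonoidHom.inr G (FreeGroup Bool) := by
      apply FreeGroup.ext_hom
      intro b
      cases b
      · show theta h g₀ hg₀ (j2 h g₀ (FreeGroup.of false)) = (1, FreeGroup.of false)
        rw [j2_false, mk_eq_inl_mul_inr, map_mul, theta_inl, theta_inr, map_inv,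
          f1_cc h g₀ hg₀]
        rw [Prod.ext_iff]
        constructor
        · simp [tu]
        · show (FreeGroup.of true * (FreeGroup.of false)⁻¹)⁻¹ *
            (tu (G := G)).2 ^ (ofAdd (1:ℤ)).toAdd = FreeGroup.of false
          simp only [tu, toAdd_ofAdd, zpow_one]
          group
      · show theta h g₀ hg₀ (j2 h g₀ (FreeGroup.of true)) = (1, FreeGroup.of true)
        rw [j2_true, theta_inr]
        rw [Prod.ext_iff]
        constructor
        · simp [tu]
        · show (tu (G := G)).2 ^ (ofAdd (1:ℤ)).toAdd = FreeGroup.of true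
          simp [tu]
    intro w
    exact DFunLike.congr_fun this w
  refine MonoidHom.ext fun x => ?_
  show theta h g₀ hg₀ (j1 h g₀ x.1 * j2 h g₀ x.2) = x
  rw [map_mul, hj1, hj2]
  ext <;> simp

/-- the isomorphism between the semidirect product and `G × F₂` -/
def ThetaE : (P h ⋊[phiA h g₀] Multiplicative ℤ) ≃* G × FreeGroup Bool :=
  MonoidHom.toMulEquiv (theta h g₀ hg₀) (theta' h g₀ hg₀)
    (theta'_comp_theta h g₀ hg₀) (theta_comp_theta' h g₀ hg₀)

end KerF2

namespace KerF2

open SemidirectProduct Multiplicative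

variable {G : Type} [Group G] (h : G →* Multiplicative ℤ) (g₀ : G)
variable (hg₀ : h g₀ = Multiplicative.ofAdd 1)

/-- the homomorphism `h'` -/
def hq : G × FreeGroup Bool →* Multiplicative ℤ :=
  (h.comp (MonoidHom.fst G (FreeGroup Bool))) *
    ((FreeGroup.lift fun _ => Multiplicative.ofAdd (1 : ℤ)).comp
      (MonoidHom.snd G (FreeGroup Bool)))

lemma hq_apply (x : G × FreeGroup Bool) :
    hq h x = h x.1 * (FreeGroup.lift fun _ => Multiplicative.ofAdd (1 : ℤ)) x.2 := rfl

include hg₀ in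
lemma hq_comp_theta : (hq h).comp (theta h g₀ hg₀) = rightHom := by
  apply SemidirectProduct.hom_ext
  · apply Monoid.PushoutI.hom_ext_nonempty
    intro b
    refine MonoidHom.ext fun g => ?_
    simp only [MonoidHom.comp_apply, theta_inl, rightHom_inl]
    have hfb : f1 h (Monoid.PushoutI.of (φ := fun _ : Bool => h.ker.subtype) b g) =
        (g, (FreeGroup.of b)⁻¹ ^ (h g).toAdd) := by
      cases b
      · exact f1_oF h g
      · exact f1_oT h g
    rw [hfb, hq_apply]
    simp only [map_zpow, map_inv, FreeGroup.lift_apply_of]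
    rw [inv_zpow, ← zpow_neg, ← ofAdd_zsmul, ← ofAdd_toAdd (h g), ← ofAdd_add]
    simp
  · refine MonoidHom.ext fun z => ?_
    simp only [MonoidHom.comp_apply, theta_inr, rightHom_inr]
    rw [hq_apply]
    show h ((1:G) ^ z.toAdd) * _ = z
    rw [one_zpow, map_one, one_mul]
    show (FreeGroup.lift fun _ => ofAdd (1:ℤ)) ((FreeGroup.of true) ^ z.toAdd) = z
    rw [map_zpow, FreeGroup.lift_apply_of, ← ofAdd_zsmul]
    simp

include hg₀ in
/-- the main isomorphism -/
noncomputable def mainIso : (hq h).ker ≃* P h := by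
  have e1 : P h ≃* (inl : P h →* P h ⋊[phiA h g₀] Multiplicative ℤ).range :=
    MonoidHom.ofInjective inl_injective
  have e2 : ((inl : P h →* P h ⋊[phiA h g₀] Multiplicative ℤ).range) ≃*
      (rightHom : P h ⋊[phiA h g₀] Multiplicative ℤ →* Multiplicative ℤ).ker :=
    MulEquiv.subgroupCongr range_inl_eq_ker_rightHom
  set Te : (P h ⋊[phiA h g₀] Multiplicative ℤ) ≃* G × FreeGroup Bool := ThetaE h g₀ hg₀ with hTe
  have e3 : (rightHom : P h ⋊[phiA h g₀] Multiplicative ℤ →* Multiplicative ℤ).ker ≃*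
      Subgroup.map (Te : (P h ⋊[phiA h g₀] Multiplicative ℤ) →* G × FreeGroup Bool)
        (rightHom : P h ⋊[phiA h g₀] Multiplicative ℤ →* Multiplicative ℤ).ker :=
    Te.subgroupMap _
  have e4 : Subgroup.map (Te : (P h ⋊[phiA h g₀] Multiplicative ℤ) →* G × FreeGroup Bool)
      (rightHom : P h ⋊[phiA h g₀] Multiplicative ℤ →* Multiplicative ℤ).ker = (hq h).ker := by
    have hc : (Te : (P h ⋊[phiA h g₀] Multiplicative ℤ) →* G × FreeGroup Bool) =
        theta h g₀ hg₀ := by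
      refine MonoidHom.ext fun x => rfl
    have hker : (rightHom : P h ⋊[phiA h g₀] Multiplicative ℤ →* Multiplicative ℤ).ker =
        Subgroup.comap (theta h g₀ hg₀) (hq h).ker := by
      rw [MonoidHom.comap_ker, hq_comp_theta h g₀ hg₀]
    rw [hc, hker]
    exact Subgroup.map_comap_eq_self_of_surjective Te.surjective _
  exact ((e1.trans e2).trans (e3.trans (MulEquiv.subgroupCongr e4))).symm

end KerF2

/-- If `h : G → ℤ` is surjective with kernel `H`, and
`h' : G × F₂(u,v) → ℤ` agrees with `h` on `G` and sends the free generators `u, v` to `1`,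
then `ker h'` is isomorphic to the amalgamated free product `G *_H G`
(two copies of `G` amalgamated along `H` via the identity, realized as the pushout of the
two copies of the inclusion `H ↪ G`). -/
theorem ker_of_product_with_F2_iso_amalgamated_product
    (G : Type) [Group G] (h : G →* Multiplicative ℤ)
    (hsurj : Function.Surjective h)
    (h' : G × FreeGroup Bool →* Multiplicative ℤ)
    (hh' : h' = (h.comp (MonoidHom.fst G (FreeGroup Bool))) *
      ((FreeGroup.lift fun _ => Multiplicative.ofAdd (1 : ℤ)).comp
        (MonoidHom.snd G (FreeGroup Bool)))) :
    Nonempty (h'.ker ≃* Monoid.PushoutI (fun _ : Bool => h.ker.subtype)) := by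
  subst hh'
  obtain ⟨g₀, hg₀⟩ := hsurj (Multiplicative.ofAdd 1)
  exact ⟨KerF2.mainIso h g₀ hg₀⟩
end

section
/- The map from the amalgamated free product G *_H G to G × F₂(u,v) defined by sending g in the left copy of G to g·u^{-h(g)} and g in the right copy to g·v^{-h(g)} (where h : G → Z is a homomorphism with kernel H) is an injective group homomorphism. -/
open Monoid CoprodI

lemma freeGroupUnit_pow_ne_one (n : ℤ) (hn : n ≠ 0) : (FreeGroup.of () : FreeGroup Unit) ^ n ≠ 1 := by
  intro hcon
  have h1 : ((Multiplicative.ofAdd (1:ℤ)) ^ n : Multiplicative ℤ) = 1 := by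
    have h0 := congrArg (FreeGroup.lift fun _ : Unit => Multiplicative.ofAdd (1:ℤ)) hcon
    simpa using h0
  apply hn
  have h2 : Multiplicative.toAdd ((Multiplicative.ofAdd (1:ℤ)) ^ n) = Multiplicative.toAdd (1 : Multiplicative ℤ) := by rw [h1]
  rwa [toAdd_zpow, toAdd_ofAdd, toAdd_one, smul_eq_mul, mul_one] at h2

lemma freeGroup_chain_pow_eq_nil (l : List (Bool × ℤ))
    (hne : ∀ p ∈ l, p.2 ≠ 0)
    (hch : l.Chain' (fun p q => p.1 ≠ q.1))
    (hprod : (l.map fun p => FreeGroup.of p.1 ^ p.2).prod = 1) : l = [] := by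
  classical
  have h2 : ((l.map fun p => CoprodI.of (M := fun _ : Bool => FreeGroup Unit)
      (i := p.1) (FreeGroup.of () ^ p.2)).prod : CoprodI fun _ : Bool => FreeGroup Unit) = 1 := by
    have h1 := congrArg (freeGroupEquivCoprodI (ι := Bool)) hprod
    rw [map_one, map_list_prod, List.map_map] at h1
    rw [← h1]
    apply congrArg
    apply List.map_congr_left
    intro p _
    simp [map_zpow]
  let w : CoprodI.Word (fun _ : Bool => FreeGroup Unit) :=
    { toList := l.map fun p => ⟨p.1, FreeGroup.of () ^ p.2⟩
      ne_one := by
        intro x hx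
        simp only [List.mem_map] at hx
        obtain ⟨p, hp, rfl⟩ := hx
        exact freeGroupUnit_pow_ne_one _ (hne p hp)
      chain_ne := by
        rw [List.isChain_map]
        exact hch }
  have hwprod : w.prod = 1 := by
    rw [Word.prod]
    rw [show w.toList = l.map fun p => ⟨p.1, FreeGroup.of () ^ p.2⟩ from rfl, List.map_map]
    exact h2
  have hinj : Function.Injective (Word.prod : Word (fun _ : Bool => FreeGroup Unit) → _) :=
    Word.equiv.symm.injective
  have : w = Word.empty := hinj (by rw [hwprod, Word.prod_empty])
  have hl : l.map (fun p => (⟨p.1, FreeGroup.of () ^ p.2⟩ :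
      Σ _ : Bool, FreeGroup Unit)) = [] := congrArg Word.toList this
  exact List.map_eq_nil_iff.mp hl


/-- The map `G *_H G → G × F₂(u,v)` sending `g` in the left copy of `G` to
`g·u^{-h(g)}` and `g` in the right copy to `g·v^{-h(g)}` (where `h : G → ℤ` is a homomorphism
with kernel `H`, and the amalgamated product is the pushout of the two copies of `H ↪ G`)
is an injective group homomorphism.  Here the left copy is indexed by `false` (with `u` the
free generator `FreeGroup.of false`) and the right copy by `true`; note
`zpowersHom _ ((FreeGroup.of b)⁻¹) (h g) = (FreeGroup.of b)^{-h(g)}`. -/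
theorem amalgamated_product_into_product_with_F2_injective
    (G : Type) [Group G] (h : G →* Multiplicative ℤ) :
    Function.Injective
      (Monoid.PushoutI.lift (φ := fun _ : Bool => h.ker.subtype)
        (fun b => (MonoidHom.id G).prod
          ((zpowersHom (FreeGroup Bool) ((FreeGroup.of b)⁻¹)).comp h))
        ((MonoidHom.inl G (FreeGroup Bool)).comp h.ker.subtype)
        (by
          intro b
          ext x
          · simp
          · have hx : h (x : G) = 1 := x.2
            simp [hx])) := by
  classical
  rw [injective_iff_map_eq_one]
  intro x hx
  have hφ : ∀ i : Bool, Function.Injective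
      ((fun _ : Bool => h.ker.subtype) i : ↥h.ker →* G) := fun _ => Subtype.coe_injective
  obtain ⟨d⟩ := Monoid.PushoutI.NormalWord.transversal_nonempty
    (fun _ : Bool => h.ker.subtype) hφ
  set w := Monoid.PushoutI.NormalWord.equiv (d := d) x with hwdef
  have hxw : w.prod = x := Monoid.PushoutI.NormalWord.equiv.symm_apply_apply x
  rw [← hxw, Monoid.PushoutI.NormalWord.prod, map_mul, Monoid.PushoutI.lift_base,
    CoprodI.Word.prod, map_list_prod, map_list_prod, List.map_map, List.map_map] at hx
  -- analyze the FreeGroup component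
  set l : List (Bool × ℤ) :=
    w.toList.map (fun p => (p.1, -(Multiplicative.toAdd (h p.2)))) with hldef
  have hsnd : (l.map fun p => FreeGroup.of p.1 ^ p.2).prod = 1 := by
    have h1 := congrArg (MonoidHom.snd G (FreeGroup Bool)) hx
    rw [map_one, map_mul, map_list_prod, List.map_map] at h1
    rw [hldef, List.map_map]
    rw [← h1]
    rw [show (MonoidHom.snd G (FreeGroup Bool))
        (((MonoidHom.inl G (FreeGroup Bool)).comp h.ker.subtype) w.head) = 1 from rfl, one_mul]
    apply congrArg
    apply List.map_congr_left
    intro p _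
    simp only [Function.comp_apply, Monoid.PushoutI.ofCoprodI_of, Monoid.PushoutI.lift_of,
      MonoidHom.prod_apply, MonoidHom.comp_apply, zpowersHom_apply, inv_zpow, ← zpow_neg]
    rfl
  have hne : ∀ p ∈ l, p.2 ≠ 0 := by
    rintro ⟨b, n⟩ hp
    simp only [hldef, List.mem_map] at hp
    obtain ⟨q, hq, hq2⟩ := hp
    obtain ⟨hb, hn⟩ := Prod.mk.injEq .. ▸ hq2
    subst hb
    intro hn0
    have hker : h q.2 = 1 := by
      have : Multiplicative.toAdd (h q.2) = 0 := by omega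
      have := congrArg Multiplicative.ofAdd this
      simpa using this
    -- q.2 is in the transversal set and in the range of the base subgroup, hence = 1
    have hmem : q.2 ∈ ((fun _ : Bool => h.ker.subtype) q.1).range := by
      rw [Subgroup.range_subtype]
      exact hker
    have hset : q.2 ∈ d.set q.1 := w.normalized q.1 q.2 (by
      have : (⟨q.1, q.2⟩ : Σ _ : Bool, G) = q := rfl
      rw [this]; exact hq)
    have hone : q.2 = 1 := by
      have hinj := (d.compl q.1).1
      have heq : ((⟨⟨q.2, hmem⟩, ⟨1, d.one_mem q.1⟩⟩ :
            ((fun _ : Bool => h.ker.subtype) q.1).range × d.set q.1)) =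
          ⟨⟨1, one_mem _⟩, ⟨q.2, hset⟩⟩ := by
        apply hinj
        simp
      have := congrArg (fun z => (z.2 : G)) heq
      simpa using this.symm
    exact w.toWord.ne_one q hq hone
  have hch : l.Chain' (fun p q => p.1 ≠ q.1) := by
    rw [hldef]
    exact (List.isChain_map _).mpr w.toWord.chain_ne
  have hl : l = [] := freeGroup_chain_pow_eq_nil l hne hch hsnd
  have hlist : w.toList = [] := by
    rw [hldef] at hl
    exact List.map_eq_nil_iff.mp hl
  rw [hlist] at hx
  simp only [List.map_nil, List.prod_nil, mul_one, MonoidHom.comp_apply,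
    MonoidHom.inl_apply] at hx
  have hhead : (w.head : G) = 1 := by
    have := congrArg Prod.fst hx
    simpa using this
  have hhead1 : w.head = 1 := Subtype.coe_injective (by simpa using hhead)
  rw [← hxw, Monoid.PushoutI.NormalWord.prod, hhead1, map_one, one_mul,
    CoprodI.Word.prod]
  rw [show w.toWord.toList = w.toList from rfl, hlist]
  simp
end
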